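/- arXiv:0712.2323 — 4 statements merged into one kernel-verified Lean document; each statement's English description precedes it below -/
import Mathlib

section
/- Assume a is a regular endpoint. Fix λ ∈ ℝ, x ∈ (a,b) and ε > 0, and let c and s be the real-valued solutions of τu = λu with c(a) = 1, (pc')(a) = 0 and s(a) = 0, (ps')(a) = 1. If m ∈ ℂ and u is a complex-valued solution of τu = (λ + iε)u on (a,b) with u(a) = 1 and (pu')(a) = m, then ‖c + m s‖_(a,x) ≤ (1 + 2 ε ‖s‖_(a,x) ‖c‖_(a,x)) ‖u‖_(a,x). -/
/-!
STATEMENT 2: the a priori bound `‖c + m s‖_(a,x) ≤ (1 + 2 ε ‖s‖ ‖c‖) ‖u‖_(a,x)`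
for Sturm–Liouville operators τu = (1/r)(-(p u')' + q u) on (a,b), a regular.
-/

open MeasureTheory Set Filter

/-- The weighted `L²` norm `‖f‖_(a,x) = (∫_a^x ‖f(t)‖² r(t) dt)^{1/2}`. -/
noncomputable def slNorm {E : Type*} [NormedAddCommGroup E] (r : ℝ → ℝ) (a x : ℝ)
    (f : ℝ → E) : ℝ :=
  Real.sqrt (∫ t in a..x, ‖f t‖ ^ 2 * r t)

/-- `u` (with quasi-derivative `du = p u'`) is a solution of `τ u = z u` on `S` with
regular endpoint `a`, expressed in integrated form. -/
def IsSolutionFrom (p q r : ℝ → ℝ) (a : ℝ) (S : Set ℝ) (z : ℂ) (u du : ℝ → ℂ) : Prop :=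
  ContinuousOn u (insert a S) ∧ ContinuousOn du (insert a S) ∧
  (∀ x ∈ S, u x = u a + ∫ t in a..x, du t / (p t : ℂ)) ∧
  (∀ x ∈ S, du x = du a + ∫ t in a..x, ((q t : ℂ) - z * (r t : ℂ)) * u t)

/-- Real-valued version of `IsSolutionFrom`. -/
def IsSolutionFromReal (p q r : ℝ → ℝ) (a : ℝ) (S : Set ℝ) (lam : ℝ) (u du : ℝ → ℝ) : Prop :=
  ContinuousOn u (insert a S) ∧ ContinuousOn du (insert a S) ∧
  (∀ x ∈ S, u x = u a + ∫ t in a..x, du t / p t) ∧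
  (∀ x ∈ S, du x = du a + ∫ t in a..x, (q t - lam * r t) * u t)


lemma my_fubini {φ ψ : ℝ → ℂ} {a t : ℝ}
    (hφ : IntegrableOn φ (Ioc a t)) (hψ : IntegrableOn ψ (Ioc a t)) :
    (∫ s in Ioc a t, φ s) * (∫ s in Ioc a t, ψ s) =
      (∫ s in Ioc a t, (∫ τ in Ioc a s, φ τ) * ψ s)
      + (∫ s in Ioc a t, φ s * ∫ τ in Ioc a s, ψ τ) := by
  set ν := volume.restrict (Ioc a t) with hν
  have hprod : Integrable (fun z : ℝ × ℝ => φ z.1 * ψ z.2) (ν.prod ν) := hφ.mul_prod hψ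
  have hT : MeasurableSet {z : ℝ × ℝ | z.1 ≤ z.2} :=
    measurableSet_le measurable_fst measurable_snd
  have hf₁ : Integrable ({z : ℝ × ℝ | z.1 ≤ z.2}.indicator fun z => φ z.1 * ψ z.2) (ν.prod ν) :=
    hprod.indicator hT
  have hf₂ : Integrable ({z : ℝ × ℝ | z.1 ≤ z.2}ᶜ.indicator fun z => φ z.1 * ψ z.2) (ν.prod ν) :=
    hprod.indicator hT.compl
  have hsplit : ∫ z, φ z.1 * ψ z.2 ∂(ν.prod ν)
      = (∫ z, ({z : ℝ × ℝ | z.1 ≤ z.2}.indicator fun z => φ z.1 * ψ z.2) z ∂(ν.prod ν))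
        + ∫ z, ({z : ℝ × ℝ | z.1 ≤ z.2}ᶜ.indicator fun z => φ z.1 * ψ z.2) z ∂(ν.prod ν) := by
    rw [← integral_add hf₁ hf₂]
    congr 1
    ext z
    by_cases h : z.1 ≤ z.2
    · simp [Set.indicator_apply, h, not_lt.mpr h]
    · simp [Set.indicator_apply, h, not_le.mp h]
  have E1 : (∫ z, ({z : ℝ × ℝ | z.1 ≤ z.2}.indicator fun z => φ z.1 * ψ z.2) z ∂(ν.prod ν))
      = ∫ s in Ioc a t, (∫ τ in Ioc a s, φ τ) * ψ s := by
    rw [integral_prod_symm _ hf₁]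
    refine setIntegral_congr_fun measurableSet_Ioc (fun y hy => ?_)
    have : (fun z : ℝ => ({z : ℝ × ℝ | z.1 ≤ z.2}.indicator fun z => φ z.1 * ψ z.2) (z, y))
        = (Iic y).indicator (fun z => φ z * ψ y) := by
      ext z
      simp [Set.indicator_apply]
    rw [this, integral_indicator measurableSet_Iic, hν,
      Measure.restrict_restrict measurableSet_Iic]
    have hset : Iic y ∩ Ioc a t = Ioc a y := by
      ext z
      simp only [mem_inter_iff, mem_Iic, mem_Ioc]
      constructor
      · rintro ⟨h1, h2, h3⟩; exact ⟨h2, h1⟩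
      · rintro ⟨h1, h2⟩; exact ⟨h2, h1, h2.trans hy.2⟩
    rw [hset, integral_mul_const]
  have E2 : (∫ z, ({z : ℝ × ℝ | z.1 ≤ z.2}ᶜ.indicator fun z => φ z.1 * ψ z.2) z ∂(ν.prod ν))
      = ∫ s in Ioc a t, φ s * ∫ τ in Ioc a s, ψ τ := by
    rw [integral_prod _ hf₂]
    refine setIntegral_congr_fun measurableSet_Ioc (fun y hy => ?_)
    have : (fun z : ℝ => ({z : ℝ × ℝ | z.1 ≤ z.2}ᶜ.indicator fun z => φ z.1 * ψ z.2) (y, z))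
        = (Iio y).indicator (fun z => φ y * ψ z) := by
      ext z
      simp [Set.indicator_apply, not_le]
    rw [this, integral_indicator measurableSet_Iio, hν,
      Measure.restrict_restrict measurableSet_Iio]
    have hset : Iio y ∩ Ioc a t = Ioo a y := by
      ext z
      simp only [mem_inter_iff, mem_Iio, mem_Ioc, mem_Ioo]
      constructor
      · rintro ⟨h1, h2, h3⟩; exact ⟨h2, h1⟩
      · rintro ⟨h1, h2⟩; exact ⟨h2, h1, (h2.trans_le hy.2).le⟩
    rw [hset, setIntegral_congr_set Ioo_ae_eq_Ioc, integral_const_mul]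
  rw [← integral_prod_mul, hsplit, E1, E2]

lemma prod_rule {F G φ ψ : ℝ → ℂ} {a x : ℝ}
    (hφ : IntegrableOn φ (Ioc a x)) (hψ : IntegrableOn ψ (Ioc a x))
    (hF : ∀ t ∈ Icc a x, F t = F a + ∫ s in Ioc a t, φ s)
    (hG : ∀ t ∈ Icc a x, G t = G a + ∫ s in Ioc a t, ψ s)
    {t : ℝ} (ht : t ∈ Icc a x) :
    F t * G t = F a * G a + ∫ s in Ioc a t, (F s * ψ s + G s * φ s) := by
  have hsub : Ioc a t ⊆ Ioc a x := Ioc_subset_Ioc_right ht.2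
  have hsub' : Ioc a t ⊆ Icc a x := hsub.trans Ioc_subset_Icc_self
  have hφt : IntegrableOn φ (Ioc a t) := hφ.mono_set hsub
  have hψt : IntegrableOn ψ (Ioc a t) := hψ.mono_set hsub
  set Φ : ℝ → ℂ := fun s => ∫ τ in Ioc a s, φ τ with hΦ
  set Ψ : ℝ → ℂ := fun s => ∫ τ in Ioc a s, ψ τ with hΨ
  have hφIcc : IntegrableOn φ (Icc a x) := hφ.congr_set_ae Ioc_ae_eq_Icc.symm
  have hψIcc : IntegrableOn ψ (Icc a x) := hψ.congr_set_ae Ioc_ae_eq_Icc.symm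
  have hΦc : ContinuousOn Φ (Icc a x) := intervalIntegral.continuousOn_primitive hφIcc
  have hΨc : ContinuousOn Ψ (Icc a x) := intervalIntegral.continuousOn_primitive hψIcc
  obtain ⟨Mφ, hMφ⟩ := isCompact_Icc.exists_bound_of_continuousOn hΦc
  obtain ⟨Mψ, hMψ⟩ := isCompact_Icc.exists_bound_of_continuousOn hΨc
  have hΦm : AEStronglyMeasurable Φ (volume.restrict (Ioc a t)) :=
    (hΦc.mono hsub').aestronglyMeasurable measurableSet_Ioc
  have hΨm : AEStronglyMeasurable Ψ (volume.restrict (Ioc a t)) :=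
    (hΨc.mono hsub').aestronglyMeasurable measurableSet_Ioc
  have hΦψ : IntegrableOn (fun s => Φ s * ψ s) (Ioc a t) :=
    hψt.bdd_mul hΦm ((ae_restrict_iff' measurableSet_Ioc).2
      (ae_of_all _ fun s hs => hMφ s (hsub' hs)))
  have hΨφ : IntegrableOn (fun s => Ψ s * φ s) (Ioc a t) :=
    hφt.bdd_mul hΨm ((ae_restrict_iff' measurableSet_Ioc).2
      (ae_of_all _ fun s hs => hMψ s (hsub' hs)))
  have key := my_fubini hφt hψt
  have comm : (∫ s in Ioc a t, φ s * Ψ s) = ∫ s in Ioc a t, Ψ s * φ s := by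
    simp_rw [mul_comm]
  have expand : (∫ s in Ioc a t, (F s * ψ s + G s * φ s))
      = (∫ s in Ioc a t, (F a * ψ s + Φ s * ψ s) + (G a * φ s + Ψ s * φ s)) := by
    refine setIntegral_congr_fun measurableSet_Ioc (fun s hs => ?_)
    rw [hF s (hsub' hs), hG s (hsub' hs)]
    ring
  have h1 : IntegrableOn (fun s => F a * ψ s + Φ s * ψ s) (Ioc a t) :=
    (hψt.const_mul _).add hΦψ
  have h2 : IntegrableOn (fun s => G a * φ s + Ψ s * φ s) (Ioc a t) :=
    (hφt.const_mul _).add hΨφ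
  have split : (∫ s in Ioc a t, (F a * ψ s + Φ s * ψ s) + (G a * φ s + Ψ s * φ s))
      = ((F a * ∫ s in Ioc a t, ψ s) + ∫ s in Ioc a t, Φ s * ψ s)
        + ((G a * ∫ s in Ioc a t, φ s) + ∫ s in Ioc a t, Ψ s * φ s) := by
    rw [integral_add h1 h2, integral_add (hψt.const_mul _) hΦψ,
      integral_add (hφt.const_mul _) hΨφ, integral_const_mul, integral_const_mul]
  rw [hF t ht, hG t ht, expand, split]
  have key' : Φ t * Ψ t = (∫ s in Ioc a t, Φ s * ψ s) + ∫ s in Ioc a t, Ψ s * φ s := by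
    rw [← comm]; exact key
  linear_combination key'

/-- A function continuous on `Icc a x` times an integrable function is integrable on `Ioc a t`. -/
lemma cont_mul_int {f g : ℝ → ℂ} {a x : ℝ}
    (hf : ContinuousOn f (Icc a x)) (hg : IntegrableOn g (Ioc a x)) :
    IntegrableOn (fun s => f s * g s) (Ioc a x) := by
  obtain ⟨M, hM⟩ := isCompact_Icc.exists_bound_of_continuousOn hf
  exact hg.bdd_mul ((hf.mono Ioc_subset_Icc_self).aestronglyMeasurable measurableSet_Ioc)
    ((ae_restrict_iff' measurableSet_Ioc).2
      (ae_of_all _ fun s hs => hM s (Ioc_subset_Icc_self hs)))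

lemma int_mul_cont {f g : ℝ → ℂ} {a x : ℝ}
    (hf : IntegrableOn f (Ioc a x)) (hg : ContinuousOn g (Icc a x)) :
    IntegrableOn (fun s => f s * g s) (Ioc a x) :=
  (cont_mul_int hg hf).congr_fun (fun s _ => mul_comm _ _) measurableSet_Ioc

/-- quasi-derivative integrand `dF / p` is integrable. -/
lemma qd_int {dF : ℝ → ℂ} {p : ℝ → ℝ} {a x : ℝ}
    (hdF : ContinuousOn dF (Icc a x)) (hpI : IntegrableOn (fun t => 1 / p t) (Ioc a x)) :
    IntegrableOn (fun s => dF s / (p s : ℂ)) (Ioc a x) := by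
  have : IntegrableOn (fun s => ((1 / p s : ℝ) : ℂ)) (Ioc a x) := hpI.ofReal
  exact (cont_mul_int hdF this).congr_fun
    (fun s _ => by push_cast; rw [mul_one_div]) measurableSet_Ioc

/-- The rhs integrand `(q - z r) F` is integrable. -/
lemma rhs_int {F : ℝ → ℂ} {q r : ℝ → ℝ} {a x : ℝ} (z : ℂ)
    (hF : ContinuousOn F (Icc a x))
    (hqI : IntegrableOn q (Ioc a x)) (hrI : IntegrableOn r (Ioc a x)) :
    IntegrableOn (fun s => ((q s : ℂ) - z * (r s : ℂ)) * F s) (Ioc a x) :=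
  int_mul_cont (hqI.ofReal.sub (hrI.ofReal.const_mul z)) hF

/-- Lagrange identity in integrated form. -/
lemma lagrange {p q r : ℝ → ℝ} {a x : ℝ}
    (hpI : IntegrableOn (fun t => 1 / p t) (Ioc a x))
    (hqI : IntegrableOn q (Ioc a x)) (hrI : IntegrableOn r (Ioc a x))
    (z w : ℂ) {F dF G dG : ℝ → ℂ}
    (hFc : ContinuousOn F (Icc a x)) (hdFc : ContinuousOn dF (Icc a x))
    (hGc : ContinuousOn G (Icc a x)) (hdGc : ContinuousOn dG (Icc a x))
    (hF : ∀ t ∈ Icc a x, F t = F a + ∫ s in Ioc a t, dF s / (p s : ℂ))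
    (hdF : ∀ t ∈ Icc a x, dF t = dF a + ∫ s in Ioc a t, ((q s : ℂ) - z * (r s : ℂ)) * F s)
    (hG : ∀ t ∈ Icc a x, G t = G a + ∫ s in Ioc a t, dG s / (p s : ℂ))
    (hdG : ∀ t ∈ Icc a x, dG t = dG a + ∫ s in Ioc a t, ((q s : ℂ) - w * (r s : ℂ)) * G s)
    {t : ℝ} (ht : t ∈ Icc a x) :
    F t * dG t - dF t * G t = (F a * dG a - dF a * G a)
      + (z - w) * ∫ s in Ioc a t, (r s : ℂ) * (F s * G s) := by
  have hsub : Ioc a t ⊆ Ioc a x := Ioc_subset_Ioc_right ht.2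
  have hsub' : Ioc a t ⊆ Icc a x := hsub.trans Ioc_subset_Icc_self
  have hφF : IntegrableOn (fun s => dF s / (p s : ℂ)) (Ioc a x) := qd_int hdFc hpI
  have hφG : IntegrableOn (fun s => dG s / (p s : ℂ)) (Ioc a x) := qd_int hdGc hpI
  have hψF : IntegrableOn (fun s => ((q s : ℂ) - z * (r s : ℂ)) * F s) (Ioc a x) :=
    rhs_int z hFc hqI hrI
  have hψG : IntegrableOn (fun s => ((q s : ℂ) - w * (r s : ℂ)) * G s) (Ioc a x) :=
    rhs_int w hGc hqI hrI
  have P1 := prod_rule hφF hψG hF hdG ht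
  have P2 := prod_rule hψF hφG hdF hG ht
  have I1 : IntegrableOn
      (fun s => F s * (((q s : ℂ) - w * (r s : ℂ)) * G s) + dG s * (dF s / (p s : ℂ)))
      (Ioc a t) := by
    have h : IntegrableOn
        (fun s => F s * (((q s : ℂ) - w * (r s : ℂ)) * G s) + dG s * (dF s / (p s : ℂ)))
        (Ioc a x) := (cont_mul_int hFc hψG).add (cont_mul_int hdGc hφF)
    exact h.mono_set hsub
  have I2 : IntegrableOn
      (fun s => dF s * (dG s / (p s : ℂ)) + G s * (((q s : ℂ) - z * (r s : ℂ)) * F s))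
      (Ioc a t) := by
    have h : IntegrableOn
        (fun s => dF s * (dG s / (p s : ℂ)) + G s * (((q s : ℂ) - z * (r s : ℂ)) * F s))
        (Ioc a x) := (cont_mul_int hdFc hφG).add (cont_mul_int hGc hψF)
    exact h.mono_set hsub
  have hdiff : (∫ s in Ioc a t,
        (F s * (((q s : ℂ) - w * (r s : ℂ)) * G s) + dG s * (dF s / (p s : ℂ))))
      - (∫ s in Ioc a t,
        (dF s * (dG s / (p s : ℂ)) + G s * (((q s : ℂ) - z * (r s : ℂ)) * F s)))
      = (z - w) * ∫ s in Ioc a t, (r s : ℂ) * (F s * G s) := by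
    rw [← integral_sub I1 I2, ← integral_const_mul]
    refine setIntegral_congr_fun measurableSet_Ioc (fun s _ => ?_)
    ring
  linear_combination P1 - P2 + hdiff

lemma slNorm_nonneg {E : Type*} [NormedAddCommGroup E] (r : ℝ → ℝ) (a x : ℝ) (f : ℝ → E) :
    0 ≤ slNorm r a x f := Real.sqrt_nonneg _

lemma sq_weight_int {E : Type*} [NormedAddCommGroup E] {f : ℝ → E} {r : ℝ → ℝ} {a x : ℝ}
    (hf : ContinuousOn f (Icc a x)) (hrI : IntegrableOn r (Ioc a x)) :
    IntegrableOn (fun t => ‖f t‖ ^ 2 * r t) (Ioc a x) := by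
  obtain ⟨M, hM⟩ := isCompact_Icc.exists_bound_of_continuousOn hf
  refine hrI.bdd_mul (c := M ^ 2)
    (((hf.norm.pow 2).mono Ioc_subset_Icc_self).aestronglyMeasurable measurableSet_Ioc) ?_
  refine (ae_restrict_iff' measurableSet_Ioc).2 (ae_of_all _ fun s hs => ?_)
  have h1 := hM s (Ioc_subset_Icc_self hs)
  have h0 : (0:ℝ) ≤ ‖f s‖ := norm_nonneg _
  simp only [Real.norm_eq_abs, abs_of_nonneg (pow_nonneg h0 2)]
  nlinarith

lemma lint_sq_eq {E : Type*} [NormedAddCommGroup E] {f : ℝ → E} {r : ℝ → ℝ} {a x : ℝ}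
    (hr : ∀ t ∈ Ioc a x, 0 < r t)
    (hfi : IntegrableOn (fun t => ‖f t‖ ^ 2 * r t) (Ioc a x)) :
    (∫⁻ t in Ioc a x, ENNReal.ofReal (‖f t‖ * Real.sqrt (r t)) ^ (2:ℝ))
      = ENNReal.ofReal (∫ t in Ioc a x, ‖f t‖ ^ 2 * r t) := by
  rw [ofReal_integral_eq_lintegral_ofReal hfi ((ae_restrict_iff' measurableSet_Ioc).2
    (ae_of_all _ fun t ht => mul_nonneg (pow_nonneg (norm_nonneg _) 2) (hr t ht).le))]
  refine setLIntegral_congr_fun measurableSet_Ioc (fun t ht => ?_)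
  rw [ENNReal.ofReal_rpow_of_nonneg (mul_nonneg (norm_nonneg _) (Real.sqrt_nonneg _))
    (by norm_num : (0:ℝ) ≤ 2), Real.rpow_two, mul_pow, Real.sq_sqrt (hr t ht).le]

lemma lint_sqrt_eq {E : Type*} [NormedAddCommGroup E] {f : ℝ → E} {r : ℝ → ℝ} {a x : ℝ}
    (hax : a ≤ x) (hr : ∀ t ∈ Ioc a x, 0 < r t)
    (hfi : IntegrableOn (fun t => ‖f t‖ ^ 2 * r t) (Ioc a x)) :
    (∫⁻ t in Ioc a x, ENNReal.ofReal (‖f t‖ * Real.sqrt (r t)) ^ (2:ℝ)) ^ (1/2 : ℝ)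
      = ENNReal.ofReal (slNorm r a x f) := by
  have hQ : (0:ℝ) ≤ ∫ t in Ioc a x, ‖f t‖ ^ 2 * r t :=
    setIntegral_nonneg measurableSet_Ioc fun t ht =>
      mul_nonneg (pow_nonneg (norm_nonneg _) 2) (hr t ht).le
  rw [lint_sq_eq hr hfi, ENNReal.ofReal_rpow_of_nonneg hQ (by norm_num),
    slNorm, intervalIntegral.integral_of_le hax, Real.sqrt_eq_rpow]

lemma cs_bound {f : ℝ → ℝ} {w : ℝ → ℂ} {r : ℝ → ℝ} {a x t : ℝ}
    (ht : t ∈ Icc a x) (hr : ∀ y ∈ Ioc a x, 0 < r y) (hrm : Measurable r)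
    (hf : ContinuousOn f (Icc a x)) (hw : ContinuousOn w (Icc a x))
    (hrI : IntegrableOn r (Ioc a x)) :
    ‖∫ s in Ioc a t, (r s : ℂ) * ((f s : ℂ) * w s)‖ ≤ slNorm r a x f * slNorm r a x w := by
  have hax : a ≤ x := ht.1.trans ht.2
  have hsub : Ioc a t ⊆ Ioc a x := Ioc_subset_Ioc_right ht.2
  -- the weighted product |f| ‖w‖ r
  have hfwc : ContinuousOn (fun s => |f s| * ‖w s‖) (Icc a x) := hf.abs.mul hw.norm
  have hgI : IntegrableOn (fun s => |f s| * ‖w s‖ * r s) (Ioc a x) := by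
    obtain ⟨M, hM⟩ := isCompact_Icc.exists_bound_of_continuousOn hfwc
    refine hrI.bdd_mul (c := M)
      ((hfwc.mono Ioc_subset_Icc_self).aestronglyMeasurable measurableSet_Ioc) ?_
    refine (ae_restrict_iff' measurableSet_Ioc).2 (ae_of_all _ fun s hs => ?_)
    have := hM s (Ioc_subset_Icc_self hs)
    rwa [Real.norm_eq_abs] at this ⊢
  have hg0 : ∀ s ∈ Ioc a x, 0 ≤ |f s| * ‖w s‖ * r s := fun s hs =>
    mul_nonneg (mul_nonneg (abs_nonneg _) (norm_nonneg _)) (hr s hs).le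
  have h1 : ‖∫ s in Ioc a t, (r s : ℂ) * ((f s : ℂ) * w s)‖
      ≤ ∫ s in Ioc a t, |f s| * ‖w s‖ * r s := by
    refine (norm_integral_le_integral_norm _).trans_eq
      (setIntegral_congr_fun measurableSet_Ioc fun s hs => ?_)
    rw [norm_mul, norm_mul, Complex.norm_real, Complex.norm_real,
      Real.norm_eq_abs, Real.norm_eq_abs, abs_of_pos (hr s (hsub hs))]
    ring
  have h2 : (∫ s in Ioc a t, |f s| * ‖w s‖ * r s) ≤ ∫ s in Ioc a x, |f s| * ‖w s‖ * r s := by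
    refine setIntegral_mono_set hgI ((ae_restrict_iff' measurableSet_Ioc).2
      (ae_of_all _ hg0)) (HasSubset.Subset.eventuallyLE hsub)
  -- convert to lintegral
  have h3 : ENNReal.ofReal (∫ s in Ioc a x, |f s| * ‖w s‖ * r s)
      = ∫⁻ s in Ioc a x, ENNReal.ofReal (‖f s‖ * Real.sqrt (r s))
          * ENNReal.ofReal (‖w s‖ * Real.sqrt (r s)) := by
    rw [ofReal_integral_eq_lintegral_ofReal hgI ((ae_restrict_iff' measurableSet_Ioc).2
      (ae_of_all _ hg0))]
    refine setLIntegral_congr_fun measurableSet_Ioc (fun s hs => ?_)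
    rw [← ENNReal.ofReal_mul (mul_nonneg (norm_nonneg _) (Real.sqrt_nonneg _))]
    congr 1
    rw [Real.norm_eq_abs]
    have h := Real.mul_self_sqrt (hr s hs).le
    linear_combination (-(|f s| * ‖w s‖)) * h
  -- Cauchy-Schwarz (Hölder with p = q = 2)
  have hconj : (2:ℝ).HolderConjugate 2 := Real.HolderConjugate.two_two
  have hGf : AEMeasurable (fun s => ENNReal.ofReal (‖f s‖ * Real.sqrt (r s)))
      (volume.restrict (Ioc a x)) :=
    ENNReal.measurable_ofReal.comp_aemeasurable
      ((((hf.norm.mono Ioc_subset_Icc_self).aemeasurable measurableSet_Ioc)).mul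
        (Real.continuous_sqrt.measurable.comp hrm).aemeasurable)
  have hGw : AEMeasurable (fun s => ENNReal.ofReal (‖w s‖ * Real.sqrt (r s)))
      (volume.restrict (Ioc a x)) :=
    ENNReal.measurable_ofReal.comp_aemeasurable
      ((((hw.norm.mono Ioc_subset_Icc_self).aemeasurable measurableSet_Ioc)).mul
        (Real.continuous_sqrt.measurable.comp hrm).aemeasurable)
  have h4 := ENNReal.lintegral_mul_le_Lp_mul_Lq (volume.restrict (Ioc a x)) hconj hGf hGw
  rw [lint_sqrt_eq hax hr (sq_weight_int hf hrI), lint_sqrt_eq hax hr (sq_weight_int hw hrI)]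
    at h4
  have h5 : (∫ s in Ioc a x, |f s| * ‖w s‖ * r s) ≤ slNorm r a x f * slNorm r a x w := by
    have hle : ENNReal.ofReal (∫ s in Ioc a x, |f s| * ‖w s‖ * r s)
        ≤ ENNReal.ofReal (slNorm r a x f * slNorm r a x w) := by
      rw [ENNReal.ofReal_mul (slNorm_nonneg r a x f)]
      exact h3.le.trans h4
    exact (ENNReal.ofReal_le_ofReal_iff
      (mul_nonneg (slNorm_nonneg r a x f) (slNorm_nonneg r a x w))).1 hle
  linarith

lemma minkowski_step {r : ℝ → ℝ} {a x : ℝ} {v u : ℝ → ℂ} {c s : ℝ → ℝ} {k₁ k₂ : ℝ}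
    (hax : a ≤ x) (hr : ∀ t ∈ Ioc a x, 0 < r t) (hrm : Measurable r)
    (hk₁ : 0 ≤ k₁) (hk₂ : 0 ≤ k₂)
    (hvc : ContinuousOn v (Icc a x)) (huc : ContinuousOn u (Icc a x))
    (hcc : ContinuousOn c (Icc a x)) (hsc : ContinuousOn s (Icc a x))
    (hrI : IntegrableOn r (Ioc a x))
    (hpt : ∀ t ∈ Ioc a x, ‖v t‖ ≤ ‖u t‖ + k₁ * |c t| + k₂ * |s t|) :
    slNorm r a x v ≤ slNorm r a x u + k₁ * slNorm r a x c + k₂ * slNorm r a x s := by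
  classical
  set ν := volume.restrict (Ioc a x) with hν
  have hsq : Measurable fun t => Real.sqrt (r t) :=
    Real.continuous_sqrt.measurable.comp hrm
  set Gv : ℝ → ENNReal := fun t => ENNReal.ofReal (‖v t‖ * Real.sqrt (r t)) with hGv
  set Gu : ℝ → ENNReal := fun t => ENNReal.ofReal (‖u t‖ * Real.sqrt (r t)) with hGu
  set Gc : ℝ → ENNReal := fun t => ENNReal.ofReal (‖c t‖ * Real.sqrt (r t)) with hGc
  set Gs : ℝ → ENNReal := fun t => ENNReal.ofReal (‖s t‖ * Real.sqrt (r t)) with hGs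
  have mGu : AEMeasurable Gu ν := ENNReal.measurable_ofReal.comp_aemeasurable
    (((huc.norm.mono Ioc_subset_Icc_self).aemeasurable measurableSet_Ioc).mul hsq.aemeasurable)
  have mGc : AEMeasurable Gc ν := ENNReal.measurable_ofReal.comp_aemeasurable
    (((hcc.norm.mono Ioc_subset_Icc_self).aemeasurable measurableSet_Ioc).mul hsq.aemeasurable)
  have mGs : AEMeasurable Gs ν := ENNReal.measurable_ofReal.comp_aemeasurable
    (((hsc.norm.mono Ioc_subset_Icc_self).aemeasurable measurableSet_Ioc).mul hsq.aemeasurable)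
  set B : ℝ → ENNReal := fun t => ENNReal.ofReal k₁ * Gc t + ENNReal.ofReal k₂ * Gs t with hB
  have mB : AEMeasurable B ν := ((mGc.const_mul _).add (mGs.const_mul _))
  -- pointwise bound
  have hpt' : ∀ t ∈ Ioc a x, Gv t ≤ Gu t + B t := by
    intro t ht
    have h1 : ‖v t‖ * Real.sqrt (r t)
        ≤ ‖u t‖ * Real.sqrt (r t) + (k₁ * (‖c t‖ * Real.sqrt (r t))
          + k₂ * (‖s t‖ * Real.sqrt (r t))) := by
      have := mul_le_mul_of_nonneg_right (hpt t ht) (Real.sqrt_nonneg (r t))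
      rw [Real.norm_eq_abs, Real.norm_eq_abs]
      nlinarith [this]
    calc Gv t ≤ ENNReal.ofReal (‖u t‖ * Real.sqrt (r t) + (k₁ * (‖c t‖ * Real.sqrt (r t))
          + k₂ * (‖s t‖ * Real.sqrt (r t)))) := ENNReal.ofReal_le_ofReal h1
      _ = Gu t + B t := by
          rw [ENNReal.ofReal_add (mul_nonneg (norm_nonneg _) (Real.sqrt_nonneg _))
            (add_nonneg (mul_nonneg hk₁ (mul_nonneg (norm_nonneg _) (Real.sqrt_nonneg _)))
              (mul_nonneg hk₂ (mul_nonneg (norm_nonneg _) (Real.sqrt_nonneg _)))),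
            ENNReal.ofReal_add (mul_nonneg hk₁ (mul_nonneg (norm_nonneg _) (Real.sqrt_nonneg _)))
              (mul_nonneg hk₂ (mul_nonneg (norm_nonneg _) (Real.sqrt_nonneg _))),
            ENNReal.ofReal_mul hk₁, ENNReal.ofReal_mul hk₂]
  have step1 : (∫⁻ t, Gv t ^ (2:ℝ) ∂ν) ≤ ∫⁻ t, ((Gu + B) t) ^ (2:ℝ) ∂ν := by
    refine lintegral_mono_ae ((ae_restrict_iff' measurableSet_Ioc).2
      (ae_of_all _ fun t ht => ?_))
    exact ENNReal.rpow_le_rpow (hpt' t ht) (by norm_num)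
  have mink1 := ENNReal.lintegral_Lp_add_le mGu mB (by norm_num : (1:ℝ) ≤ 2)
  -- second Minkowski on B
  have mink2 := ENNReal.lintegral_Lp_add_le (mGc.const_mul (ENNReal.ofReal k₁))
    (mGs.const_mul (ENNReal.ofReal k₂)) (by norm_num : (1:ℝ) ≤ 2)
  have const1 : (∫⁻ t, ((fun t => ENNReal.ofReal k₁ * Gc t) t) ^ (2:ℝ) ∂ν) ^ (1/2:ℝ)
      = ENNReal.ofReal k₁ * (∫⁻ t, Gc t ^ (2:ℝ) ∂ν) ^ (1/2:ℝ) := by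
    have e1 : ∀ t, (ENNReal.ofReal k₁ * Gc t) ^ (2:ℝ)
        = ENNReal.ofReal k₁ ^ (2:ℝ) * Gc t ^ (2:ℝ) := fun t =>
      ENNReal.mul_rpow_of_nonneg _ _ (by norm_num)
    simp_rw [e1]
    rw [lintegral_const_mul' _ _ (ENNReal.rpow_lt_top_of_nonneg (by norm_num)
      ENNReal.ofReal_ne_top).ne,
      ENNReal.mul_rpow_of_nonneg _ _ (by norm_num : (0:ℝ) ≤ 1/2), ← ENNReal.rpow_mul]
    norm_num
  have const2 : (∫⁻ t, ((fun t => ENNReal.ofReal k₂ * Gs t) t) ^ (2:ℝ) ∂ν) ^ (1/2:ℝ)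
      = ENNReal.ofReal k₂ * (∫⁻ t, Gs t ^ (2:ℝ) ∂ν) ^ (1/2:ℝ) := by
    have e1 : ∀ t, (ENNReal.ofReal k₂ * Gs t) ^ (2:ℝ)
        = ENNReal.ofReal k₂ ^ (2:ℝ) * Gs t ^ (2:ℝ) := fun t =>
      ENNReal.mul_rpow_of_nonneg _ _ (by norm_num)
    simp_rw [e1]
    rw [lintegral_const_mul' _ _ (ENNReal.rpow_lt_top_of_nonneg (by norm_num)
      ENNReal.ofReal_ne_top).ne,
      ENNReal.mul_rpow_of_nonneg _ _ (by norm_num : (0:ℝ) ≤ 1/2), ← ENNReal.rpow_mul]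
    norm_num
  -- assemble in ℝ≥0∞
  have main : (∫⁻ t, Gv t ^ (2:ℝ) ∂ν) ^ (1/2:ℝ)
      ≤ (∫⁻ t, Gu t ^ (2:ℝ) ∂ν) ^ (1/2:ℝ)
        + (ENNReal.ofReal k₁ * (∫⁻ t, Gc t ^ (2:ℝ) ∂ν) ^ (1/2:ℝ)
          + ENNReal.ofReal k₂ * (∫⁻ t, Gs t ^ (2:ℝ) ∂ν) ^ (1/2:ℝ)) := by
    calc (∫⁻ t, Gv t ^ (2:ℝ) ∂ν) ^ (1/2:ℝ)
        ≤ (∫⁻ t, ((Gu + B) t) ^ (2:ℝ) ∂ν) ^ (1/2:ℝ) :=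
          ENNReal.rpow_le_rpow step1 (by norm_num)
      _ ≤ (∫⁻ t, Gu t ^ (2:ℝ) ∂ν) ^ (1/2:ℝ) + (∫⁻ t, B t ^ (2:ℝ) ∂ν) ^ (1/2:ℝ) := mink1
      _ ≤ _ := by
          gcongr
          calc (∫⁻ t, B t ^ (2:ℝ) ∂ν) ^ (1/2:ℝ)
              ≤ (∫⁻ t, ((fun t => ENNReal.ofReal k₁ * Gc t) t) ^ (2:ℝ) ∂ν) ^ (1/2:ℝ)
                + (∫⁻ t, ((fun t => ENNReal.ofReal k₂ * Gs t) t) ^ (2:ℝ) ∂ν) ^ (1/2:ℝ) := mink2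
            _ = _ := by rw [const1, const2]
  -- convert to real
  have hfiv := sq_weight_int hvc hrI
  have hfiu := sq_weight_int huc hrI
  have hfic := sq_weight_int hcc hrI
  have hfis := sq_weight_int hsc hrI
  rw [lint_sqrt_eq hax hr hfiv, lint_sqrt_eq hax hr hfiu, lint_sqrt_eq hax hr hfic,
    lint_sqrt_eq hax hr hfis] at main
  have hrhs : ENNReal.ofReal (slNorm r a x u)
        + (ENNReal.ofReal k₁ * ENNReal.ofReal (slNorm r a x c)
          + ENNReal.ofReal k₂ * ENNReal.ofReal (slNorm r a x s))
      = ENNReal.ofReal (slNorm r a x u + (k₁ * slNorm r a x c + k₂ * slNorm r a x s)) := by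
    rw [ENNReal.ofReal_add (slNorm_nonneg r a x u) (add_nonneg
        (mul_nonneg hk₁ (slNorm_nonneg r a x c)) (mul_nonneg hk₂ (slNorm_nonneg r a x s))),
      ENNReal.ofReal_add (mul_nonneg hk₁ (slNorm_nonneg r a x c))
        (mul_nonneg hk₂ (slNorm_nonneg r a x s)),
      ENNReal.ofReal_mul hk₁, ENNReal.ofReal_mul hk₂]
  rw [hrhs] at main
  have := (ENNReal.ofReal_le_ofReal_iff (add_nonneg (slNorm_nonneg r a x u) (add_nonneg
    (mul_nonneg hk₁ (slNorm_nonneg r a x c)) (mul_nonneg hk₂ (slNorm_nonneg r a x s))))).1 main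
  linarith

theorem norm_bound_c_plus_ms
    (a : ℝ) (b : EReal) (hab : (a : EReal) < b)
    (p q r : ℝ → ℝ) (S : Set ℝ) (hS : S = {x : ℝ | a < x ∧ (x : EReal) < b})
    -- basic assumptions on the coefficients
    (hpm : Measurable p) (hqm : Measurable q) (hrm : Measurable r)
    (hp : ∀ x ∈ S, 0 < p x) (hr : ∀ x ∈ S, 0 < r x)
    (hploc : LocallyIntegrableOn (fun t => 1 / p t) S)
    (hqloc : LocallyIntegrableOn q S) (hrloc : LocallyIntegrableOn r S)
    -- `a` is a regular endpoint
    (hreg : ∀ x ∈ S, IntegrableOn (fun t => 1 / p t) (Ioo a x) ∧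
      IntegrableOn q (Ioo a x) ∧ IntegrableOn r (Ioo a x))
    (lam : ℝ) (x : ℝ) (hx : x ∈ S) (ε : ℝ) (hε : 0 < ε)
    -- `c` and `s`: the real solutions of `τ u = λ u` with the stated initial conditions
    (c dc s ds : ℝ → ℝ)
    (hc : IsSolutionFromReal p q r a S lam c dc)
    (hs : IsSolutionFromReal p q r a S lam s ds)
    (hc0 : c a = 1) (hdc0 : dc a = 0) (hs0 : s a = 0) (hds0 : ds a = 1)
    -- `u`: a solution of `τ u = (λ + iε) u` with `u(a)=1`, `(p u')(a) = m`
    (m : ℂ) (u du : ℝ → ℂ)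
    (hu : IsSolutionFrom p q r a S ((lam : ℂ) + Complex.I * (ε : ℂ)) u du)
    (hu0 : u a = 1) (hdu0 : du a = m) :
    slNorm r a x (fun t => (c t : ℂ) + m * (s t : ℂ)) ≤
      (1 + 2 * ε * slNorm r a x s * slNorm r a x c) * slNorm r a x u := by
  -- basic set facts
  have hax : a < x := by rw [hS] at hx; exact hx.1
  have hIoc : Ioc a x ⊆ S := by
    intro z hz
    rw [hS]
    exact ⟨hz.1, lt_of_le_of_lt (EReal.coe_le_coe_iff.2 hz.2) (hS ▸ hx).2⟩
  have hIcc : Icc a x ⊆ insert a S := by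
    intro z hz
    rcases eq_or_lt_of_le hz.1 with h | h
    · exact h ▸ mem_insert a S
    · exact mem_insert_of_mem _ (hIoc ⟨h, hz.2⟩)
  have hr' : ∀ t ∈ Ioc a x, 0 < r t := fun t ht => hr t (hIoc ht)
  -- integrability of coefficients on `Ioc a x`
  have hpI : IntegrableOn (fun t => 1 / p t) (Ioc a x) :=
    (hreg x hx).1.congr_set_ae Ioo_ae_eq_Ioc.symm
  have hqI : IntegrableOn q (Ioc a x) := (hreg x hx).2.1.congr_set_ae Ioo_ae_eq_Ioc.symm
  have hrI : IntegrableOn r (Ioc a x) := (hreg x hx).2.2.congr_set_ae Ioo_ae_eq_Ioc.symm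
  -- continuity on `Icc a x`
  have hcc : ContinuousOn c (Icc a x) := hc.1.mono hIcc
  have hdcc : ContinuousOn dc (Icc a x) := hc.2.1.mono hIcc
  have hsc : ContinuousOn s (Icc a x) := hs.1.mono hIcc
  have hdsc : ContinuousOn ds (Icc a x) := hs.2.1.mono hIcc
  have huc : ContinuousOn u (Icc a x) := hu.1.mono hIcc
  have hduc : ContinuousOn du (Icc a x) := hu.2.1.mono hIcc
  set cC : ℝ → ℂ := fun t => (c t : ℂ) with hcC
  set dcC : ℝ → ℂ := fun t => (dc t : ℂ) with hdcC
  set sC : ℝ → ℂ := fun t => (s t : ℂ) with hsC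
  set dsC : ℝ → ℂ := fun t => (ds t : ℂ) with hdsC
  have hccC : ContinuousOn cC (Icc a x) := Complex.continuous_ofReal.comp_continuousOn hcc
  have hdccC : ContinuousOn dcC (Icc a x) := Complex.continuous_ofReal.comp_continuousOn hdcc
  have hscC : ContinuousOn sC (Icc a x) := Complex.continuous_ofReal.comp_continuousOn hsc
  have hdscC : ContinuousOn dsC (Icc a x) := Complex.continuous_ofReal.comp_continuousOn hdsc
  -- integrated equations on Icc, real solutions cast to ℂ
  have castEq : ∀ (f df : ℝ → ℝ) (lam' : ℝ),
      (∀ y ∈ S, f y = f a + ∫ t in a..y, df t / p t) →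
      (∀ y ∈ S, df y = df a + ∫ t in a..y, (q t - lam' * r t) * f t) →
      (∀ t ∈ Icc a x, ((f t : ℂ)) = (f a : ℂ) + ∫ τ in Ioc a t, (df τ : ℂ) / (p τ : ℂ)) ∧
      (∀ t ∈ Icc a x, ((df t : ℂ)) = (df a : ℂ)
        + ∫ τ in Ioc a t, ((q τ : ℂ) - (lam' : ℂ) * (r τ : ℂ)) * (f τ : ℂ)) := by
    intro f df lam' h1 h2
    constructor
    · intro t ht
      rcases eq_or_lt_of_le ht.1 with h | h
      · simp [← h]
      · have e : (∫ τ in Ioc a t, (df τ : ℂ) / (p τ : ℂ))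
            = ((∫ τ in Ioc a t, df τ / p τ : ℝ) : ℂ) := by
          have e1 : (∫ τ in Ioc a t, (df τ : ℂ) / (p τ : ℂ))
              = ∫ τ in Ioc a t, ((df τ / p τ : ℝ) : ℂ) :=
            setIntegral_congr_fun measurableSet_Ioc
              fun τ _ => (Complex.ofReal_div _ _).symm
          rw [e1]
          exact integral_ofReal
        rw [e]
        have := h1 t (hIoc ⟨h, ht.2⟩)
        rw [intervalIntegral.integral_of_le h.le] at this
        exact_mod_cast this
    · intro t ht
      rcases eq_or_lt_of_le ht.1 with h | h
      · simp [← h]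
      · have e : (∫ τ in Ioc a t, ((q τ : ℂ) - (lam' : ℂ) * (r τ : ℂ)) * (f τ : ℂ))
            = ((∫ τ in Ioc a t, (q τ - lam' * r τ) * f τ : ℝ) : ℂ) := by
          have e1 : (∫ τ in Ioc a t, ((q τ : ℂ) - (lam' : ℂ) * (r τ : ℂ)) * (f τ : ℂ))
              = ∫ τ in Ioc a t, (((q τ - lam' * r τ) * f τ : ℝ) : ℂ) :=
            setIntegral_congr_fun measurableSet_Ioc
              fun τ _ => by push_cast; ring
          rw [e1]
          exact integral_ofReal
        rw [e]
        have := h2 t (hIoc ⟨h, ht.2⟩)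
        rw [intervalIntegral.integral_of_le h.le] at this
        exact_mod_cast this
  obtain ⟨hCeq, hdCeq⟩ := castEq c dc lam hc.2.2.1 hc.2.2.2
  obtain ⟨hSeq, hdSeq⟩ := castEq s ds lam hs.2.2.1 hs.2.2.2
  have hUeq : ∀ t ∈ Icc a x, u t = u a + ∫ τ in Ioc a t, du τ / (p τ : ℂ) := by
    intro t ht
    rcases eq_or_lt_of_le ht.1 with h | h
    · simp [← h]
    · have := hu.2.2.1 t (hIoc ⟨h, ht.2⟩)
      rwa [intervalIntegral.integral_of_le h.le] at this
  have hdUeq : ∀ t ∈ Icc a x, du t = du a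
      + ∫ τ in Ioc a t, ((q τ : ℂ) - ((lam : ℂ) + Complex.I * (ε : ℂ)) * (r τ : ℂ)) * u τ := by
    intro t ht
    rcases eq_or_lt_of_le ht.1 with h | h
    · simp [← h]
    · have := hu.2.2.2 t (hIoc ⟨h, ht.2⟩)
      rwa [intervalIntegral.integral_of_le h.le] at this
  -- initial values, cast
  have hca : cC a = 1 := by simp [hcC, hc0]
  have hdca : dcC a = 0 := by simp [hdcC, hdc0]
  have hsa : sC a = 0 := by simp [hsC, hs0]
  have hdsa : dsC a = 1 := by simp [hdsC, hds0]
  -- the three Wronskian identities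
  have W1 := fun (t : ℝ) (ht : t ∈ Icc a x) =>
    lagrange hpI hqI hrI (lam : ℂ) ((lam : ℂ) + Complex.I * (ε : ℂ))
      hccC hdccC huc hduc hCeq hdCeq hUeq hdUeq ht
  have W2 := fun (t : ℝ) (ht : t ∈ Icc a x) =>
    lagrange hpI hqI hrI (lam : ℂ) ((lam : ℂ) + Complex.I * (ε : ℂ))
      hscC hdscC huc hduc hSeq hdSeq hUeq hdUeq ht
  have W3 := fun (t : ℝ) (ht : t ∈ Icc a x) =>
    lagrange hpI hqI hrI (lam : ℂ) (lam : ℂ)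
      hccC hdccC hscC hdscC hCeq hdCeq hSeq hdSeq ht
  -- pointwise identity
  have key : ∀ t ∈ Icc a x, cC t + m * sC t
      = u t + Complex.I * (ε : ℂ) *
        ((sC t) * (∫ τ in Ioc a t, (r τ : ℂ) * (cC τ * u τ))
          - (cC t) * ∫ τ in Ioc a t, (r τ : ℂ) * (sC τ * u τ)) := by
    intro t ht
    have e1 := W1 t ht
    have e2 := W2 t ht
    have e3 := W3 t ht
    rw [hca, hdca, hu0, hdu0] at e1
    rw [hsa, hdsa, hu0, hdu0] at e2
    rw [hca, hdca, hsa, hdsa] at e3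
    linear_combination u t * e3 + cC t * e2 - sC t * e1
  -- norms
  set Cn := slNorm r a x c with hCn
  set Sn := slNorm r a x s with hSn
  set Un := slNorm r a x u with hUn
  have hCn0 : 0 ≤ Cn := slNorm_nonneg r a x c
  have hSn0 : 0 ≤ Sn := slNorm_nonneg r a x s
  have hUn0 : 0 ≤ Un := slNorm_nonneg r a x u
  -- pointwise norm bound
  have hpt : ∀ t ∈ Ioc a x, ‖cC t + m * sC t‖
      ≤ ‖u t‖ + (ε * (Sn * Un)) * |c t| + (ε * (Cn * Un)) * |s t| := by
    intro t ht
    have ht' : t ∈ Icc a x := Ioc_subset_Icc_self ht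
    have hIcb : ‖∫ τ in Ioc a t, (r τ : ℂ) * (cC τ * u τ)‖ ≤ Cn * Un :=
      cs_bound ht' hr' hrm hcc huc hrI
    have hIsb : ‖∫ τ in Ioc a t, (r τ : ℂ) * (sC τ * u τ)‖ ≤ Sn * Un :=
      cs_bound ht' hr' hrm hsc huc hrI
    rw [key t ht']
    set Ic := ∫ τ in Ioc a t, (r τ : ℂ) * (cC τ * u τ)
    set Is := ∫ τ in Ioc a t, (r τ : ℂ) * (sC τ * u τ)
    calc ‖u t + Complex.I * (ε : ℂ) * (sC t * Ic - cC t * Is)‖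
        ≤ ‖u t‖ + ‖Complex.I * (ε : ℂ) * (sC t * Ic - cC t * Is)‖ := norm_add_le _ _
      _ = ‖u t‖ + ε * ‖sC t * Ic - cC t * Is‖ := by
          rw [norm_mul, norm_mul, Complex.norm_I, one_mul, Complex.norm_real,
            Real.norm_eq_abs, abs_of_pos hε]
      _ ≤ ‖u t‖ + ε * (|s t| * ‖Ic‖ + |c t| * ‖Is‖) := by
          have := (norm_sub_le (sC t * Ic) (cC t * Is)).trans_eq (by
            rw [norm_mul, norm_mul, Complex.norm_real, Complex.norm_real,
              Real.norm_eq_abs, Real.norm_eq_abs])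
          nlinarith [this, hε.le]
      _ ≤ ‖u t‖ + (ε * (Sn * Un)) * |c t| + (ε * (Cn * Un)) * |s t| := by
          nlinarith [mul_le_mul_of_nonneg_left hIcb (abs_nonneg (s t)),
            mul_le_mul_of_nonneg_left hIsb (abs_nonneg (c t)), hε.le,
            abs_nonneg (s t), abs_nonneg (c t)]
  -- Minkowski
  have main := minkowski_step (v := fun t => (c t : ℂ) + m * (s t : ℂ)) (u := u)
    (c := c) (s := s) hax.le hr' hrm
    (mul_nonneg hε.le (mul_nonneg hSn0 hUn0)) (mul_nonneg hε.le (mul_nonneg hCn0 hUn0))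
    (hccC.add (continuousOn_const.mul hscC)) huc hcc hsc hrI hpt
  calc slNorm r a x (fun t => (c t : ℂ) + m * (s t : ℂ))
      ≤ Un + ε * (Sn * Un) * Cn + ε * (Cn * Un) * Sn := main
    _ = (1 + 2 * ε * Sn * Cn) * Un := by ring
end

section
/- Let (a,b) = (a,∞) with a > −∞ and assume (H2) and (H3). Fix λ ∈ ℝ and let u be a real-valued solution of τu = λu on (a,∞) such that √(r(x)) |u(x)| + |p(x)u'(x)| / √(r(x)) ≥ C₁ > 0 for all x ∈ (a,∞). Then for every α with 0 < α < I₋ / (I₋ + √γ) and every x with [x−1, x+1] ⊂ (a,∞), there exists x₀ ∈ [x−1, x+1] such that √(r(x₀)) |u(x₀)| ≥ α C₁. -/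
/-!
STATEMENT 11: On (a,∞) with (H2), (H3): if u is a real solution of τu = λu with
√r|u| + |pu'|/√r ≥ C₁ > 0 everywhere, then for every 0 < α < I₋/(I₋ + √γ) and
every window [x-1,x+1] ⊂ (a,∞) there is x₀ ∈ [x-1,x+1] with √(r(x₀))|u(x₀)| ≥ αC₁.
-/

open MeasureTheory Set Filter

open scoped ENNReal

/-- `u` (with quasi-derivative `du = p u'`) is a real solution of `τ u = λ u` on the
open set `S`, expressed in integrated form between any two points of `S`. -/
def IsSolutionOnReal (p q r : ℝ → ℝ) (S : Set ℝ) (lam : ℝ) (u du : ℝ → ℝ) : Prop :=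
  ContinuousOn u S ∧ ContinuousOn du S ∧
  ∀ x ∈ S, ∀ y ∈ S,
    (u y = u x + ∫ t in x..y, du t / p t) ∧
    (du y = du x + ∫ t in x..y, (q t - lam * r t) * u t)

/-- `r₋(x) = inf_{[x-1,x+1]} r`. -/
noncomputable def rMinus (r : ℝ → ℝ) (x : ℝ) : ℝ := sInf (r '' Set.Icc (x - 1) (x + 1))

/-- `r₊(x) = sup_{[x-1,x+1]} r`. -/
noncomputable def rPlus (r : ℝ → ℝ) (x : ℝ) : ℝ := sSup (r '' Set.Icc (x - 1) (x + 1))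

/-- `I₋ = inf_x ∫_x^{x+1} r(t)/p(t) dt`, the infimum over `x` with `(x,x+1] ⊂ (a,∞)`,
computed as a lower Lebesgue integral (so possibly infinite values are handled). -/
noncomputable def IminusE (p r : ℝ → ℝ) (a : ℝ) : ℝ≥0∞ :=
  ⨅ x ∈ Set.Ioi a, ∫⁻ t in Set.Ioc x (x + 1), ENNReal.ofReal (r t / p t)

/-- `γ = sup_x r₊(x)/r₋(x)`, the supremum over `x` with `[x-1,x+1] ⊂ (a,∞)`. -/
noncomputable def slGamma (r : ℝ → ℝ) (a : ℝ) : ℝ :=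
  sSup ((fun x => rPlus r x / rMinus r x) '' Set.Ioi (a + 1))

theorem solution_not_small_on_windows
    (a : ℝ) (p q r : ℝ → ℝ)
    -- basic assumptions on the coefficients, on (a,∞)
    (hpm : Measurable p) (hqm : Measurable q) (hrm : Measurable r)
    (hp : ∀ x ∈ Set.Ioi a, 0 < p x) (hr : ∀ x ∈ Set.Ioi a, 0 < r x)
    (hploc : LocallyIntegrableOn (fun t => 1 / p t) (Set.Ioi a))
    (hqloc : LocallyIntegrableOn q (Set.Ioi a))
    (hrloc : LocallyIntegrableOn r (Set.Ioi a))
    -- (H2): `I₋ > 0`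
    (hI : 0 < IminusE p r a)
    -- (H3): `γ < ∞`, i.e. the set of ratios is bounded above, with `0 < r₋ ≤ r₊ < ∞`
    (hwin : ∀ x : ℝ, a + 1 < x → 0 < rMinus r x ∧ BddAbove (r '' Set.Icc (x - 1) (x + 1)))
    (hgambdd : BddAbove ((fun x => rPlus r x / rMinus r x) '' Set.Ioi (a + 1)))
    (lam : ℝ)
    -- `u`: a real solution of `τ u = λ u` with the pointwise lower bound `C₁`
    (u du : ℝ → ℝ) (hu : IsSolutionOnReal p q r (Set.Ioi a) lam u du)
    (C₁ : ℝ) (hC₁ : 0 < C₁)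
    (hlb : ∀ x ∈ Set.Ioi a, C₁ ≤ Real.sqrt (r x) * |u x| + |du x| / Real.sqrt (r x)) :
    -- conclusion: for every `0 < α < I₋/(I₋ + √γ)` (the inequality `α < I₋/(I₋+√γ)`
    -- being expressed as `α·√γ < (1-α)·I₋` to accommodate `I₋ = ∞`) and every window
    ∀ α : ℝ, 0 < α →
      ENNReal.ofReal (α * Real.sqrt (slGamma r a)) <
        ENNReal.ofReal (1 - α) * IminusE p r a →
      ∀ x : ℝ, a + 1 < x →
        ∃ x₀ ∈ Set.Icc (x - 1) (x + 1), α * C₁ ≤ Real.sqrt (r x₀) * |u x₀| := by 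
  obtain ⟨hucont, hducont, hsol⟩ := hu
  intro α hα hαlt x hx
  by_contra hcon
  push_neg at hcon
  -- window facts
  have hx1 : a < x - 1 := by linarith
  have hWsub : Set.Icc (x - 1) (x + 1) ⊆ Set.Ioi a := fun t ht => lt_of_lt_of_le hx1 ht.1
  obtain ⟨hrmin, hbdd⟩ := hwin x hx
  set A := Real.sqrt (rMinus r x) with hAdef
  set B := Real.sqrt (rPlus r x) with hBdef
  have hApos : 0 < A := Real.sqrt_pos.2 hrmin
  have hrA : ∀ t ∈ Set.Icc (x - 1) (x + 1), rMinus r x ≤ r t := fun t ht =>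
    csInf_le ⟨0, fun y hy => by obtain ⟨s, hs, rfl⟩ := hy; exact (hr s (hWsub hs)).le⟩
      (Set.mem_image_of_mem r ht)
  have hrB : ∀ t ∈ Set.Icc (x - 1) (x + 1), r t ≤ rPlus r x := fun t ht =>
    le_csSup hbdd (Set.mem_image_of_mem r ht)
  have hxmem : x ∈ Set.Icc (x - 1) (x + 1) := ⟨by linarith, by linarith⟩
  have hrPpos : 0 < rPlus r x := lt_of_lt_of_le (hr x (hWsub hxmem)) (hrB x hxmem)
  have hBpos : 0 < B := Real.sqrt_pos.2 hrPpos
  -- γ bound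
  have hratio : rPlus r x / rMinus r x ≤ slGamma r a := le_csSup hgambdd ⟨x, hx, rfl⟩
  have hBAdiv : B / A ≤ Real.sqrt (slGamma r a) := by
    rw [hAdef, hBdef, ← Real.sqrt_div hrPpos.le]
    exact Real.sqrt_le_sqrt hratio
  have hγpos : 0 < Real.sqrt (slGamma r a) := lt_of_lt_of_le (div_pos hBpos hApos) hBAdiv
  have hBA : B ≤ Real.sqrt (slGamma r a) * A := (div_le_iff₀ hApos).1 hBAdiv
  -- 1 - α > 0
  have h1α : 0 < 1 - α := by
    by_contra h
    push_neg at h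
    rw [ENNReal.ofReal_eq_zero.mpr h, zero_mul] at hαlt
    simp at hαlt
  -- pointwise lower bound on |du|
  have hdu : ∀ t ∈ Set.Icc (x - 1) (x + 1), (1 - α) * C₁ * Real.sqrt (r t) ≤ |du t| := by
    intro t ht
    have hrt : 0 < r t := hr t (hWsub ht)
    have hst : 0 < Real.sqrt (r t) := Real.sqrt_pos.2 hrt
    have h1 := hlb t (hWsub ht)
    have h2 := hcon t ht
    have h3 : (1 - α) * C₁ ≤ |du t| / Real.sqrt (r t) := by linarith
    calc (1 - α) * C₁ * Real.sqrt (r t) ≤ (|du t| / Real.sqrt (r t)) * Real.sqrt (r t) :=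
          mul_le_mul_of_nonneg_right h3 hst.le
      _ = |du t| := div_mul_cancel₀ _ hst.ne'
  have hdune : ∀ t ∈ Set.Icc (x - 1) (x + 1), du t ≠ 0 := by
    intro t ht h0
    have h1 := hdu t ht
    rw [h0, abs_zero] at h1
    have h2 : 0 < (1 - α) * C₁ * Real.sqrt (r t) :=
      mul_pos (mul_pos h1α hC₁) (Real.sqrt_pos.2 (hr t (hWsub ht)))
    linarith
  -- du has constant sign on the window
  have hsign : (∀ t ∈ Set.Icc (x - 1) (x + 1), 0 < du t) ∨
      (∀ t ∈ Set.Icc (x - 1) (x + 1), du t < 0) := by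
    by_contra hs
    push_neg at hs
    obtain ⟨⟨t₁, ht₁, h1⟩, ⟨t₂, ht₂, h2⟩⟩ := hs
    have hsub : Set.uIcc t₁ t₂ ⊆ Set.Icc (x - 1) (x + 1) := Set.uIcc_subset_Icc ht₁ ht₂
    have hcont : ContinuousOn du (Set.uIcc t₁ t₂) := (hducont.mono hWsub).mono hsub
    have h0 : (0 : ℝ) ∈ Set.uIcc (du t₁) (du t₂) := Set.Icc_subset_uIcc ⟨h1, h2⟩
    obtain ⟨t₀, ht₀, h⟩ := intermediate_value_uIcc hcont h0
    exact hdune t₀ (hsub ht₀) h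
  -- integrability of du / p on the window
  have h1pW : IntegrableOn (fun t => 1 / p t) (Set.Icc (x - 1) (x + 1)) :=
    hploc.integrableOn_compact_subset hWsub isCompact_Icc
  have hduWc : ContinuousOn du (Set.Icc (x - 1) (x + 1)) := hducont.mono hWsub
  obtain ⟨Cb, hCb⟩ := isCompact_Icc.exists_bound_of_continuousOn hduWc
  have hdumeas : AEStronglyMeasurable du (volume.restrict (Set.Icc (x - 1) (x + 1))) :=
    hduWc.aestronglyMeasurable measurableSet_Icc
  have hintW : IntegrableOn (fun t => du t / p t) (Set.Icc (x - 1) (x + 1)) := by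
    have h := Integrable.bdd_mul (c := Cb) h1pW hdumeas
      ((ae_restrict_iff' measurableSet_Icc).2 (ae_of_all _ hCb))
    refine h.congr (ae_of_all _ fun t => ?_)
    simp [div_eq_mul_inv]
  have hintS : IntegrableOn (fun t => du t / p t) (Set.Ioc (x - 1) (x + 1)) :=
    hintW.mono_set Set.Ioc_subset_Icc_self
  have hintSabs : IntegrableOn (fun t => |du t| / p t) (Set.Ioc (x - 1) (x + 1)) := by
    refine hintS.abs.congr ((ae_restrict_iff' measurableSet_Ioc).2 (ae_of_all _ fun t ht => ?_))
    show |du t / p t| = |du t| / p t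
    rw [abs_div, abs_of_pos (hp t (hWsub (Set.Ioc_subset_Icc_self ht)))]
  -- the integrated solution identity
  have hm1 : (x - 1 : ℝ) ∈ Set.Ioi a := hx1
  have hm2 : (x + 1 : ℝ) ∈ Set.Ioi a := by simp only [Set.mem_Ioi]; linarith
  have hueq := (hsol (x - 1) hm1 (x + 1) hm2).1
  rw [intervalIntegral.integral_of_le (by linarith : x - 1 ≤ x + 1)] at hueq
  -- bound on endpoint values
  have hub : ∀ t ∈ Set.Icc (x - 1) (x + 1), |u t| < α * C₁ / A := by
    intro t ht
    have hst : A ≤ Real.sqrt (r t) := by rw [hAdef]; exact Real.sqrt_le_sqrt (hrA t ht)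
    have h2 := hcon t ht
    rw [lt_div_iff₀ hApos]
    calc |u t| * A ≤ |u t| * Real.sqrt (r t) := mul_le_mul_of_nonneg_left hst (abs_nonneg _)
      _ = Real.sqrt (r t) * |u t| := mul_comm _ _
      _ < α * C₁ := h2
  -- D = ∫ |du|/p over the window
  set D := ∫ t in Set.Ioc (x - 1) (x + 1), |du t| / p t with hDdef
  have hD : D ≤ 2 * (α * C₁ / A) := by
    have hu1 := hub (x + 1) ⟨by linarith, le_refl _⟩
    have hu0 := hub (x - 1) ⟨le_refl _, by linarith⟩
    rcases hsign with hpos | hneg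
    · have heq : D = u (x + 1) - u (x - 1) := by
        rw [hDdef, show (∫ t in Set.Ioc (x - 1) (x + 1), |du t| / p t)
            = ∫ t in Set.Ioc (x - 1) (x + 1), du t / p t from
          setIntegral_congr_fun measurableSet_Ioc fun t ht => by
            rw [abs_of_pos (hpos t (Set.Ioc_subset_Icc_self ht))]]
        linarith [hueq]
      have := le_abs_self (u (x + 1))
      have := neg_abs_le (u (x - 1))
      linarith
    · have heq : D = -(u (x + 1) - u (x - 1)) := by
        rw [hDdef, show (∫ t in Set.Ioc (x - 1) (x + 1), |du t| / p t)
            = ∫ t in Set.Ioc (x - 1) (x + 1), -(du t / p t) from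
          setIntegral_congr_fun measurableSet_Ioc fun t ht => by
            rw [abs_of_neg (hneg t (Set.Ioc_subset_Icc_self ht))]; ring,
          integral_neg]
        linarith [hueq]
      have := le_abs_self (u (x - 1))
      have := neg_abs_le (u (x + 1))
      linarith
  -- lower lintegral bound
  have hdisj : Disjoint (Set.Ioc (x - 1) x) (Set.Ioc x (x + 1)) := by
    rw [Set.disjoint_left]
    rintro t ⟨_, h2⟩ ⟨h3, _⟩
    exact absurd h3 (not_lt.2 h2)
  have hIlow : ∀ y : ℝ, a < y →
      IminusE p r a ≤ ∫⁻ t in Set.Ioc y (y + 1), ENNReal.ofReal (r t / p t) := by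
    intro y hy
    exact iInf₂_le y hy
  have h2I : 2 * IminusE p r a ≤
      ∫⁻ t in Set.Ioc (x - 1) (x + 1), ENNReal.ofReal (r t / p t) := by
    rw [show Set.Ioc (x - 1) (x + 1) = Set.Ioc (x - 1) x ∪ Set.Ioc x (x + 1) from
      (Set.Ioc_union_Ioc_eq_Ioc (by linarith) (by linarith)).symm,
      lintegral_union measurableSet_Ioc hdisj]
    have e1 := hIlow (x - 1) hx1
    rw [show x - 1 + 1 = x from by ring] at e1
    have e2 := hIlow x (by linarith)
    calc 2 * IminusE p r a = IminusE p r a + IminusE p r a := two_mul _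
      _ ≤ _ := add_le_add e1 e2
  have hcpos : 0 < (1 - α) * C₁ / B := div_pos (mul_pos h1α hC₁) hBpos
  have hpoint : ∀ t ∈ Set.Ioc (x - 1) (x + 1),
      (1 - α) * C₁ / B * (r t / p t) ≤ |du t| / p t := by
    intro t ht
    have htW := Set.Ioc_subset_Icc_self ht
    have hpt := hp t (hWsub htW)
    have hrt := hr t (hWsub htW)
    have hsB : Real.sqrt (r t) ≤ B := by rw [hBdef]; exact Real.sqrt_le_sqrt (hrB t htW)
    have hsrt : 0 < Real.sqrt (r t) := Real.sqrt_pos.2 hrt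
    have hrtB : r t / B ≤ Real.sqrt (r t) := by
      rw [div_le_iff₀ hBpos]
      nlinarith [Real.mul_self_sqrt hrt.le]
    have hgoal : (1 - α) * C₁ / B * r t ≤ |du t| := by
      calc (1 - α) * C₁ / B * r t = (1 - α) * C₁ * (r t / B) := by ring
        _ ≤ (1 - α) * C₁ * Real.sqrt (r t) :=
            mul_le_mul_of_nonneg_left hrtB (mul_nonneg h1α.le hC₁.le)
        _ ≤ |du t| := hdu t htW
    calc (1 - α) * C₁ / B * (r t / p t) = ((1 - α) * C₁ / B * r t) / p t := by ring
      _ ≤ |du t| / p t := (div_le_div_iff_of_pos_right hpt).2 hgoal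
  have hmono : (∫⁻ t in Set.Ioc (x - 1) (x + 1),
        ENNReal.ofReal ((1 - α) * C₁ / B * (r t / p t))) ≤
      ∫⁻ t in Set.Ioc (x - 1) (x + 1), ENNReal.ofReal (|du t| / p t) :=
    lintegral_mono_ae ((ae_restrict_iff' measurableSet_Ioc).2
      (ae_of_all _ fun t ht => ENNReal.ofReal_le_ofReal (hpoint t ht)))
  have hconst : (∫⁻ t in Set.Ioc (x - 1) (x + 1),
        ENNReal.ofReal ((1 - α) * C₁ / B * (r t / p t))) =
      ENNReal.ofReal ((1 - α) * C₁ / B) *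
        ∫⁻ t in Set.Ioc (x - 1) (x + 1), ENNReal.ofReal (r t / p t) := by
    simp_rw [ENNReal.ofReal_mul hcpos.le]
    exact lintegral_const_mul' _ _ ENNReal.ofReal_ne_top
  have hDeq : ENNReal.ofReal D =
      ∫⁻ t in Set.Ioc (x - 1) (x + 1), ENNReal.ofReal (|du t| / p t) :=
    ofReal_integral_eq_lintegral_ofReal hintSabs
      ((ae_restrict_iff' measurableSet_Ioc).2 (ae_of_all _ fun t ht =>
        div_nonneg (abs_nonneg _) (hp t (hWsub (Set.Ioc_subset_Icc_self ht))).le))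
  have hmain : ENNReal.ofReal ((1 - α) * C₁ / B) * (2 * IminusE p r a) ≤
      ENNReal.ofReal (2 * (α * C₁ / A)) := by
    calc ENNReal.ofReal ((1 - α) * C₁ / B) * (2 * IminusE p r a)
        ≤ ENNReal.ofReal ((1 - α) * C₁ / B) *
            ∫⁻ t in Set.Ioc (x - 1) (x + 1), ENNReal.ofReal (r t / p t) :=
          mul_le_mul_right h2I _
      _ = _ := hconst.symm
      _ ≤ _ := hmono
      _ = ENNReal.ofReal D := hDeq.symm
      _ ≤ _ := ENNReal.ofReal_le_ofReal hD
  have hKtop : IminusE p r a ≠ ⊤ := by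
    intro h
    rw [h, show (2 : ℝ≥0∞) * ⊤ = ⊤ from ENNReal.mul_top (by norm_num),
      ENNReal.mul_top (ENNReal.ofReal_pos.2 hcpos).ne'] at hmain
    exact absurd (top_le_iff.1 hmain) ENNReal.ofReal_ne_top
  set k := (IminusE p r a).toReal with hkdef
  have hKeq : IminusE p r a = ENNReal.ofReal k := (ENNReal.ofReal_toReal hKtop).symm
  rw [hKeq] at hmain hαlt
  have h2 : ENNReal.ofReal ((1 - α) * C₁ / B * (2 * k)) ≤
      ENNReal.ofReal (2 * (α * C₁ / A)) := by
    calc ENNReal.ofReal ((1 - α) * C₁ / B * (2 * k))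
        = ENNReal.ofReal ((1 - α) * C₁ / B) * (2 * ENNReal.ofReal k) := by
          rw [ENNReal.ofReal_mul hcpos.le, ENNReal.ofReal_mul (by norm_num : (0:ℝ) ≤ 2),
            ENNReal.ofReal_ofNat]
      _ ≤ _ := hmain
  have hreal2 : (1 - α) * C₁ / B * (2 * k) ≤ 2 * (α * C₁ / A) :=
    (ENNReal.ofReal_le_ofReal_iff
      (mul_nonneg (by norm_num) (div_nonneg (mul_nonneg hα.le hC₁.le) hApos.le))).1 h2
  rw [← ENNReal.ofReal_mul h1α.le] at hαlt
  have hreal1 : α * Real.sqrt (slGamma r a) < (1 - α) * k :=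
    (ENNReal.ofReal_lt_ofReal_iff_of_nonneg (mul_nonneg hα.le hγpos.le)).1 hαlt
  have h8 : (1 - α) * k * (2 * C₁ * A) ≤ α * Real.sqrt (slGamma r a) * (2 * C₁ * A) := by
    have h9 : (1 - α) * C₁ / B * (2 * k) * (A * B) ≤ 2 * (α * C₁ / A) * (A * B) :=
      mul_le_mul_of_nonneg_right hreal2 (mul_pos hApos hBpos).le
    have e1 : (1 - α) * C₁ / B * (2 * k) * (A * B) = (1 - α) * k * (2 * C₁ * A) := by
      field_simp
    have e2 : 2 * (α * C₁ / A) * (A * B) = 2 * α * C₁ * B := by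
      field_simp
    rw [e1, e2] at h9
    nlinarith [mul_le_mul_of_nonneg_left hBA
      (mul_nonneg (mul_nonneg (by norm_num : (0:ℝ) ≤ 2) hα.le) hC₁.le)]
  have h10 : (1 - α) * k ≤ α * Real.sqrt (slGamma r a) :=
    le_of_mul_le_mul_right h8 (mul_pos (mul_pos two_pos hC₁) hApos)
  linarith
end

section
/- Let (a,b) = (0,∞) and suppose there is c > 0 such that 1 − 1/p and 1 − r belong to L¹((c,∞)), and q = q₁ + q₂ where q₁ ∈ L¹((c,∞)), q₂ is locally absolutely continuous with q₂' ∈ L¹((c,∞)), and q₂(t) → 0 as t → ∞. Fix λ > 0, 0 < ε < λ, and t₀ ≥ c with |q₂(t)| ≤ ε for all t ≥ t₀. Let u be a nonzero real-valued solution of τu = λu and define h(t) = (λ − q₂(t)) u(t)² + (p(t)u'(t))². Then h is locally absolutely continuous and strictly positive on [t₀,∞), and for almost every t ≥ t₀ one has |h'(t)| ≤ g(t) h(t), where g(t) = |q₂'(t)|/(λ−ε) + |q₁(t)|/√(λ−ε) + ( (λ+ε) |1 − 1/p(t)| + λ |1 − r(t)| )/√(λ−ε) belongs to L¹((t₀,∞)).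 Consequently, h(t) converges to a finite positive limit as t → ∞. -/
/-!
STATEMENT 13: the Weidmann-type Gronwall estimate. With asymptotically
Schrödinger-like coefficients, λ > 0, 0 < ε < λ, t₀ ≥ c with |q₂| ≤ ε on [t₀,∞),
and u a nonzero real solution of τu = λu, the function
h = (λ - q₂) u² + (p u')² is locally AC and positive on [t₀,∞), satisfies
|h'| ≤ g h a.e. with g ∈ L¹((t₀,∞)), and converges to a finite positive limit.
-/

open MeasureTheory Set Filter

lemma double_split {x y : ℝ} (hxy : x ≤ y) (F G : ℝ → ℝ)
    (hF : IntegrableOn F (Set.Ioc x y)) (hG : IntegrableOn G (Set.Ioc x y)) :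
    (∫ s in Set.Ioc x y, F s * ∫ t in Set.Ioc x s, G t)
      + (∫ t in Set.Ioc x y, G t * ∫ s in Set.Ioc x t, F s)
    = (∫ s in Set.Ioc x y, F s) * ∫ t in Set.Ioc x y, G t := by
  set μ := volume.restrict (Set.Ioc x y) with hμ
  have hDle : MeasurableSet {z : ℝ × ℝ | z.2 ≤ z.1} := measurableSet_le measurable_snd measurable_fst
  have hDge : MeasurableSet {z : ℝ × ℝ | z.1 ≤ z.2} := measurableSet_le measurable_fst measurable_snd
  have hFG : Integrable (fun z : ℝ × ℝ => F z.1 * G z.2) (μ.prod μ) := Integrable.mul_prod hF hG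
  have hΨ₁ : Integrable ({z : ℝ × ℝ | z.2 ≤ z.1}.indicator (fun z => F z.1 * G z.2)) (μ.prod μ) :=
    hFG.indicator hDle
  have hΨ₂ : Integrable ({z : ℝ × ℝ | z.1 ≤ z.2}.indicator (fun z => F z.1 * G z.2)) (μ.prod μ) :=
    hFG.indicator hDge
  -- rewrite inner integrals with indicators
  have e1 : ∀ s ∈ Set.Ioc x y, F s * (∫ t in Set.Ioc x s, G t)
      = ∫ t, {z : ℝ × ℝ | z.2 ≤ z.1}.indicator (fun z => F z.1 * G z.2) (s, t) ∂μ := by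
    intro s hs
    have hset : Set.Ioc x y ∩ Set.Iic s = Set.Ioc x s := by
      ext t; simp only [Set.mem_inter_iff, Set.mem_Iic, Set.mem_Ioc]
      exact ⟨fun ⟨⟨h2, h3⟩, h1⟩ => ⟨h2, h1⟩, fun ⟨h1, h2⟩ => ⟨⟨h1, h2.trans hs.2⟩, h2⟩⟩
    have : ∫ t, (Set.Iic s).indicator G t ∂μ = ∫ t in Set.Ioc x s, G t := by
      rw [hμ, setIntegral_indicator measurableSet_Iic, hset]
    rw [← this, ← integral_const_mul]
    congr 1; ext t
    by_cases h : t ≤ s <;>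
      simp [Set.indicator_apply, h]
  have e2 : ∀ t ∈ Set.Ioc x y, G t * (∫ s in Set.Ioc x t, F s)
      = ∫ s, {z : ℝ × ℝ | z.1 ≤ z.2}.indicator (fun z => F z.1 * G z.2) (s, t) ∂μ := by
    intro t ht
    have hset : Set.Ioc x y ∩ Set.Iic t = Set.Ioc x t := by
      ext s; simp only [Set.mem_inter_iff, Set.mem_Iic, Set.mem_Ioc]
      exact ⟨fun ⟨⟨h2, h3⟩, h1⟩ => ⟨h2, h1⟩, fun ⟨h1, h2⟩ => ⟨⟨h1, h2.trans ht.2⟩, h2⟩⟩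
    have : ∫ s, (Set.Iic t).indicator F s ∂μ = ∫ s in Set.Ioc x t, F s := by
      rw [hμ, setIntegral_indicator measurableSet_Iic, hset]
    rw [← this, ← integral_const_mul]
    congr 1; ext s
    by_cases h : s ≤ t <;> simp [Set.indicator_apply, h, mul_comm]
  have hres : ∀ s : Set ℝ, volume.restrict (Set.Ioc x y) = μ := fun _ => rfl
  -- turn iterated integrals into product integrals
  have D1 : (∫ s in Set.Ioc x y, F s * ∫ t in Set.Ioc x s, G t)
      = ∫ z, {z : ℝ × ℝ | z.2 ≤ z.1}.indicator (fun z => F z.1 * G z.2) z ∂(μ.prod μ) := by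
    rw [hμ, setIntegral_congr_fun measurableSet_Ioc e1, hres ∅]
    have := integral_integral (f := fun s t => {z : ℝ × ℝ | z.2 ≤ z.1}.indicator
        (fun z => F z.1 * G z.2) (s, t)) (μ := μ) (ν := μ) (by exact hΨ₁)
    simpa using this
  have D2 : (∫ t in Set.Ioc x y, G t * ∫ s in Set.Ioc x t, F s)
      = ∫ z, {z : ℝ × ℝ | z.1 ≤ z.2}.indicator (fun z => F z.1 * G z.2) z ∂(μ.prod μ) := by
    rw [hμ, setIntegral_congr_fun measurableSet_Ioc e2, hres ∅]
    have hsw : Integrable (Function.uncurry fun t s => {z : ℝ × ℝ | z.1 ≤ z.2}.indicator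
        (fun z => F z.1 * G z.2) (s, t)) (μ.prod μ) := by
      have := hΨ₂.swap
      exact this
    have := integral_integral (f := fun t s => {z : ℝ × ℝ | z.1 ≤ z.2}.indicator
        (fun z => F z.1 * G z.2) (s, t)) (μ := μ) (ν := μ) hsw
    rw [this]
    have := integral_prod_swap (μ := μ) (ν := μ)
      (f := fun z : ℝ × ℝ => {z : ℝ × ℝ | z.1 ≤ z.2}.indicator (fun z => F z.1 * G z.2) z)
    rw [← this]
    rfl
  rw [D1, D2, ← integral_add hΨ₁ hΨ₂]
  have diag0 : (μ.prod μ) {z : ℝ × ℝ | z.1 = z.2} = 0 := by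
    have hd : MeasurableSet {z : ℝ × ℝ | z.1 = z.2} :=
      measurableSet_eq_fun measurable_fst measurable_snd
    rw [Measure.prod_apply hd]
    have : ∀ s : ℝ, μ (Prod.mk s ⁻¹' {z : ℝ × ℝ | z.1 = z.2}) = 0 := by
      intro s
      have : Prod.mk s ⁻¹' {z : ℝ × ℝ | z.1 = z.2} = {s} := by
        ext t; simp [eq_comm]
      rw [this, hμ]
      exact le_antisymm (le_trans (Measure.restrict_le_self _) (by simp)) bot_le
    simp [this]
  have hae : (fun z : ℝ × ℝ => {z : ℝ × ℝ | z.2 ≤ z.1}.indicator (fun z => F z.1 * G z.2) z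
      + {z : ℝ × ℝ | z.1 ≤ z.2}.indicator (fun z => F z.1 * G z.2) z)
      =ᵐ[μ.prod μ] (fun z : ℝ × ℝ => F z.1 * G z.2) := by
    have : ∀ᵐ z ∂(μ.prod μ), (z : ℝ × ℝ).1 ≠ z.2 := by
      rw [ae_iff]
      simpa using diag0
    filter_upwards [this] with z hz
    rcases lt_or_gt_of_ne hz with h | h
    · simp [Set.indicator_apply, le_of_lt h, not_le.mpr h]
    · simp [Set.indicator_apply, le_of_lt h, not_le.mpr h]
  rw [integral_congr_ae hae, integral_prod_mul]

lemma prod_rule_le {x y : ℝ} (hxy : x ≤ y) (f g f' g' : ℝ → ℝ)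
    (hf' : IntervalIntegrable f' volume x y) (hg' : IntervalIntegrable g' volume x y)
    (hfc : ContinuousOn f (Set.uIcc x y)) (hgc : ContinuousOn g (Set.uIcc x y))
    (hf : ∀ t ∈ Set.uIcc x y, f t = f x + ∫ s in x..t, f' s)
    (hg : ∀ t ∈ Set.uIcc x y, g t = g x + ∫ s in x..t, g' s) :
    f y * g y = f x * g x + ∫ t in x..y, (f' t * g t + f t * g' t) := by
  have hmemy : y ∈ Set.uIcc x y := Set.right_mem_uIcc
  have hsub : Set.Ioc x y ⊆ Set.uIcc x y := by
    rw [Set.uIcc_of_le hxy]; exact Set.Ioc_subset_Icc_self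
  have hF : IntegrableOn f' (Set.Ioc x y) := hf'.1
  have hG : IntegrableOn g' (Set.Ioc x y) := hg'.1
  have hFint : (∫ s in Set.Ioc x y, f' s) = f y - f x := by
    have := hf y hmemy
    rw [intervalIntegral.integral_of_le hxy] at this; linarith
  have hGint : (∫ s in Set.Ioc x y, g' s) = g y - g x := by
    have := hg y hmemy
    rw [intervalIntegral.integral_of_le hxy] at this; linarith
  have hIfg' : IntervalIntegrable (fun t => f t * g' t) volume x y := hg'.continuousOn_mul hfc
  have hIf'g : IntervalIntegrable (fun t => f' t * g t) volume x y := hf'.mul_continuousOn hgc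
  rw [intervalIntegral.integral_add hIf'g hIfg']
  have Gcont : ContinuousOn (fun t => ∫ s in x..t, g' s) (Set.uIcc x y) :=
    intervalIntegral.continuousOn_primitive_interval' hg' Set.left_mem_uIcc
  have Fcont : ContinuousOn (fun t => ∫ s in x..t, f' s) (Set.uIcc x y) :=
    intervalIntegral.continuousOn_primitive_interval' hf' Set.left_mem_uIcc
  have i2 : IntegrableOn (fun t => f' t * ∫ s in Set.Ioc x t, g' s) (Set.Ioc x y) := by
    refine (hF.mul_continuousOn_of_subset Gcont measurableSet_Ioc isCompact_uIcc hsub).congr_fun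
      (fun t ht => ?_) measurableSet_Ioc
    simp only [intervalIntegral.integral_of_le ht.1.le]
  have i2' : IntegrableOn (fun t => g' t * ∫ s in Set.Ioc x t, f' s) (Set.Ioc x y) := by
    refine (hG.mul_continuousOn_of_subset Fcont measurableSet_Ioc isCompact_uIcc hsub).congr_fun
      (fun t ht => ?_) measurableSet_Ioc
    simp only [intervalIntegral.integral_of_le ht.1.le]
  have P1 : (∫ t in x..y, f' t * g t)
      = (f y - f x) * g x + ∫ s in Set.Ioc x y, f' s * ∫ t in Set.Ioc x s, g' t := by
    rw [intervalIntegral.integral_of_le hxy]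
    have e : EqOn (fun t => f' t * g t)
        (fun t => f' t * g x + f' t * ∫ s in Set.Ioc x t, g' s) (Set.Ioc x y) := by
      intro t ht
      have : g t = g x + ∫ s in Set.Ioc x t, g' s := by
        rw [← intervalIntegral.integral_of_le ht.1.le]; exact hg t (hsub ht)
      simp only [this]; ring
    rw [setIntegral_congr_fun measurableSet_Ioc e,
      integral_add (hF.mul_const _) i2, integral_mul_const, hFint]
  have P2 : (∫ t in x..y, f t * g' t)
      = f x * (g y - g x) + ∫ t in Set.Ioc x y, g' t * ∫ s in Set.Ioc x t, f' s := by
    rw [intervalIntegral.integral_of_le hxy]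
    have e : EqOn (fun t => f t * g' t)
        (fun t => f x * g' t + g' t * ∫ s in Set.Ioc x t, f' s) (Set.Ioc x y) := by
      intro t ht
      have : f t = f x + ∫ s in Set.Ioc x t, f' s := by
        rw [← intervalIntegral.integral_of_le ht.1.le]; exact hf t (hsub ht)
      simp only [this]; ring
    rw [setIntegral_congr_fun measurableSet_Ioc e,
      integral_add (hG.const_mul _) i2', integral_const_mul, hGint]
  have hds := double_split hxy f' g' hF hG
  rw [hFint, hGint] at hds
  rw [P1, P2]
  linear_combination -hds

lemma prod_rule_s13 {x y : ℝ} (f g f' g' : ℝ → ℝ)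
    (hf' : IntervalIntegrable f' volume x y) (hg' : IntervalIntegrable g' volume x y)
    (hfc : ContinuousOn f (Set.uIcc x y)) (hgc : ContinuousOn g (Set.uIcc x y))
    (hf : ∀ t ∈ Set.uIcc x y, f t = f x + ∫ s in x..t, f' s)
    (hg : ∀ t ∈ Set.uIcc x y, g t = g x + ∫ s in x..t, g' s) :
    f y * g y = f x * g x + ∫ t in x..y, (f' t * g t + f t * g' t) := by
  rcases le_total x y with hxy | hyx
  · exact prod_rule_le hxy f g f' g' hf' hg' hfc hgc hf hg
  · have hswap : ∀ (φ φ' : ℝ → ℝ), IntervalIntegrable φ' volume x y →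
        (∀ t ∈ Set.uIcc x y, φ t = φ x + ∫ s in x..t, φ' s) →
        (∀ t ∈ Set.uIcc y x, φ t = φ y + ∫ s in y..t, φ' s) := by
      intro φ φ' hII hrep t ht
      rw [Set.uIcc_comm] at ht
      have h1 := hrep t ht
      have h2 := hrep y Set.right_mem_uIcc
      have hadd : (∫ s in x..y, φ' s) + ∫ s in y..t, φ' s = ∫ s in x..t, φ' s :=
        intervalIntegral.integral_add_adjacent_intervals hII
          (hII.mono_set (Set.uIcc_subset_uIcc Set.right_mem_uIcc ht))
      rw [h1, h2]; linarith
    have := prod_rule_le hyx f g f' g' hf'.symm hg'.symm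
      (by rwa [Set.uIcc_comm]) (by rwa [Set.uIcc_comm])
      (hswap f f' hf' hf) (hswap g g' hg' hg)
    rw [intervalIntegral.integral_symm] at this
    linarith

lemma zero_propagation {a b : ℝ} (hab : a ≤ b) (w K : ℝ → ℝ)
    (hw : ContinuousOn w (Set.Icc a b)) (hw0 : ∀ t ∈ Set.Icc a b, 0 ≤ w t)
    (hK : IntervalIntegrable K volume a b) (hK0 : ∀ t ∈ Set.Icc a b, 0 ≤ K t)
    (hineq : ∀ x' y', a ≤ x' → x' ≤ y' → y' ≤ b → w y' ≤ w x' + ∫ t in x'..y', K t * w t)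
    (ha : w a = 0) : ∀ t ∈ Set.Icc a b, w t = 0 := by
  have huIcc : Set.uIcc a b = Set.Icc a b := Set.uIcc_of_le hab
  set S := {t : ℝ | t ∈ Set.Icc a b ∧ ∀ s ∈ Set.Icc a t, w s = 0} with hS
  have haS : a ∈ S := ⟨⟨le_refl a, hab⟩, fun s hs => by
    have : s = a := le_antisymm hs.2 hs.1
    rw [this]; exact ha⟩
  have hne : S.Nonempty := ⟨a, haS⟩
  have hbdd : BddAbove S := ⟨b, fun t ht => ht.1.2⟩
  set T := sSup S with hT
  have hTa : a ≤ T := le_csSup hbdd haS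
  have hTb : T ≤ b := csSup_le hne (fun t ht => ht.1.2)
  have hTIcc : T ∈ Set.Icc a b := ⟨hTa, hTb⟩
  have hwT : ∀ s ∈ Set.Icc a T, w s = 0 := by
    have hwTT : w T = 0 := by
      rcases eq_or_lt_of_le hTa with heq' | hlt'
      · rw [← heq']; exact ha
      · have hzero : ∀ r ∈ Set.Ico a T, w r = 0 := by
          intro r hr
          obtain ⟨t, htS, hrt⟩ := exists_lt_of_lt_csSup hne hr.2
          exact htS.2 r ⟨hr.1, hrt.le⟩
        have hclos : T ∈ closure (Set.Ico a T) := by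
          rw [closure_Ico (ne_of_lt hlt')]; exact ⟨hlt'.le, le_refl T⟩
        have hne' : (nhdsWithin T (Set.Ico a T)).NeBot :=
          mem_closure_iff_nhdsWithin_neBot.mp hclos
        have hcw : Tendsto w (nhdsWithin T (Set.Ico a T)) (nhds (w T)) :=
          (hw.continuousWithinAt hTIcc).mono
            (fun r (hr : r ∈ Set.Ico a T) => ⟨hr.1, hr.2.le.trans hTb⟩)
        have hcw0 : Tendsto w (nhdsWithin T (Set.Ico a T)) (nhds 0) := by
          refine Tendsto.congr' ?_ tendsto_const_nhds
          filter_upwards [self_mem_nhdsWithin] with r hr using (hzero r hr).symm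
        exact tendsto_nhds_unique hcw hcw0
    intro s hs
    rcases eq_or_lt_of_le hs.2 with heq | hlt
    · rw [heq]; exact hwTT
    · obtain ⟨t, htS, hst⟩ := exists_lt_of_lt_csSup hne hlt
      exact htS.2 s ⟨hs.1, hst.le⟩
  -- it suffices to show T = b
  rcases eq_or_lt_of_le hTb with heq | hTlt
  · intro t ht; exact hwT t ⟨ht.1, by rw [heq]; exact ht.2⟩
  exfalso
  -- primitive of K is continuous; pick y > T with ∫_T^y K < 1/2
  have hφ : ContinuousOn (fun t => ∫ s in T..t, K s) (Set.Icc a b) := by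
    rw [← huIcc]
    exact intervalIntegral.continuousOn_primitive_interval' hK (by rw [huIcc]; exact hTIcc)
  have hφT : ContinuousWithinAt (fun t => ∫ s in T..t, K s) (Set.Icc a b) T :=
    hφ.continuousWithinAt hTIcc
  rw [Metric.continuousWithinAt_iff] at hφT
  obtain ⟨δ, hδ, hδP⟩ := hφT (1/2) (by norm_num)
  set y := min b (T + δ/2) with hy
  have hTy : T < y := lt_min hTlt (by linarith)
  have hyb : y ≤ b := min_le_left _ _
  have hyIcc : y ∈ Set.Icc a b := ⟨hTa.trans hTy.le, hyb⟩
  have hφsmall : ∀ s ∈ Set.Icc T y, (∫ t in T..s, K t) < 1/2 := by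
    intro s hs
    have hsIcc : s ∈ Set.Icc a b := ⟨hTa.trans hs.1, hs.2.trans hyb⟩
    have hdist : dist s T < δ := by
      rw [Real.dist_eq, abs_of_nonneg (by linarith [hs.1])]
      have : s ≤ T + δ/2 := hs.2.trans (min_le_right _ _)
      linarith
    have := hδP hsIcc hdist
    simp only [intervalIntegral.integral_same, dist_zero_right] at this
    calc (∫ t in T..s, K t) ≤ |∫ t in T..s, K t| := le_abs_self _
      _ < 1/2 := by rwa [Real.norm_eq_abs] at this
  -- maximum of w on [T,y]
  have hwTy : ContinuousOn w (Set.Icc T y) :=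
    hw.mono (fun s hs => ⟨hTa.trans hs.1, hs.2.trans hyb⟩)
  obtain ⟨s', hs'mem, hmax⟩ := (isCompact_Icc).exists_isMaxOn
    (Set.nonempty_Icc.mpr hTy.le) hwTy
  set M := w s' with hM
  have hMnn : 0 ≤ M := by
    have := hmax (Set.left_mem_Icc.mpr hTy.le)
    simp only [hM]
    calc (0:ℝ) = w T := (hwT T ⟨hTa, le_refl T⟩).symm
      _ ≤ w s' := this
  have hsub' : Set.Icc T s' ⊆ Set.Icc a b := fun s hs =>
    ⟨hTa.trans hs.1, (hs.2.trans hs'mem.2).trans hyb⟩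
  have hKW : IntervalIntegrable (fun t => K t * w t) volume T s' := by
    refine (hK.mono_set ?_).mul_continuousOn ?_
    · rw [huIcc, Set.uIcc_of_le hs'mem.1]; exact hsub'
    · exact (hw.mono hsub').mono (by rw [Set.uIcc_of_le hs'mem.1])
  have hKM : IntervalIntegrable (fun t => K t * M) volume T s' :=
    ((hK.mono_set (by rw [huIcc, Set.uIcc_of_le hs'mem.1]; exact hsub')).mul_const M)
  have step : M ≤ M/2 := by
    have h1 : w s' ≤ w T + ∫ t in T..s', K t * w t :=
      hineq T s' hTa hs'mem.1 ((hs'mem.2).trans hyb)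
    have h2 : (∫ t in T..s', K t * w t) ≤ ∫ t in T..s', K t * M := by
      refine intervalIntegral.integral_mono_on hs'mem.1 hKW hKM (fun t ht => ?_)
      have htab : t ∈ Set.Icc a b := hsub' ht
      exact mul_le_mul_of_nonneg_left
        (hmax ⟨ht.1, ht.2.trans hs'mem.2⟩) (hK0 t htab)
    have h3 : (∫ t in T..s', K t * M) = (∫ t in T..s', K t) * M := by
      rw [intervalIntegral.integral_mul_const]
    have h4 : (∫ t in T..s', K t) * M ≤ (1/2) * M := by
      refine mul_le_mul_of_nonneg_right ?_ hMnn
      exact (hφsmall s' ⟨hs'mem.1, hs'mem.2⟩).le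
    have h5 : w T = 0 := hwT T ⟨hTa, le_refl T⟩
    calc M = w s' := rfl
      _ ≤ w T + ∫ t in T..s', K t * w t := h1
      _ ≤ 0 + (1/2) * M := by rw [h5]; linarith
      _ = M/2 := by ring
  have hM0' : M = 0 := by linarith
  have hyS : y ∈ S := by
    refine ⟨hyIcc, fun s hs => ?_⟩
    rcases le_or_gt s T with hsT | hTs
    · exact hwT s ⟨hs.1, hsT⟩
    · have hsmem : s ∈ Set.Icc T y := ⟨hTs.le, hs.2⟩
      have hsab : s ∈ Set.Icc a b := ⟨hs.1, hs.2.trans hyb⟩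
      exact le_antisymm (hM0' ▸ hmax hsmem) (hw0 s hsab)
  have : y ≤ T := le_csSup hbdd hyS
  linarith

lemma zero_propagation' {a b : ℝ} (hab : a ≤ b) (w K : ℝ → ℝ)
    (hw : ContinuousOn w (Set.Icc a b)) (hw0 : ∀ t ∈ Set.Icc a b, 0 ≤ w t)
    (hK : IntervalIntegrable K volume a b) (hK0 : ∀ t ∈ Set.Icc a b, 0 ≤ K t)
    (hineq : ∀ x' y', a ≤ x' → x' ≤ y' → y' ≤ b → w x' ≤ w y' + ∫ t in x'..y', K t * w t)
    (hb : w b = 0) : ∀ t ∈ Set.Icc a b, w t = 0 := by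
  have hmaps : ∀ t ∈ Set.Icc (-b) (-a), -t ∈ Set.Icc a b := by
    intro t ht; exact ⟨by linarith [ht.2], by linarith [ht.1]⟩
  have key := zero_propagation (a := -b) (b := -a) (by linarith)
    (fun t => w (-t)) (fun t => K (-t))
    (hw.comp continuous_neg.continuousOn hmaps)
    (fun t ht => hw0 _ (hmaps t ht))
    (by
      have := (IntervalIntegrable.iff_comp_neg (f := K) (a := b) (b := a)).mp hK.symm
      exact this)
    (fun t ht => hK0 _ (hmaps t ht))
    (by
      intro x' y' h1 h2 h3
      have hint : (∫ t in x'..y', K (-t) * w (-t)) = ∫ t in -y'..-x', K t * w t := by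
        exact intervalIntegral.integral_comp_neg (f := fun s => K s * w s)
      rw [hint]
      exact hineq (-y') (-x') (by linarith) (by linarith) (by linarith))
    (by simpa using hb)
  intro t ht
  have := key (-t) ⟨by linarith [ht.2], by linarith [ht.1]⟩
  simpa using this

lemma quad_bounds {lam ε q2v uv duv hv : ℝ} (hle : 0 < lam - ε)
    (hbd : lam - ε ≤ lam - q2v) (hexp : hv = (lam - q2v) * uv ^ 2 + duv ^ 2) :
    uv * uv * (lam - ε) ≤ hv ∧ 2 * |uv| * |duv| * Real.sqrt (lam - ε) ≤ hv := by
  constructor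
  · nlinarith [sq_nonneg duv, sq_nonneg uv]
  · have hs2 : Real.sqrt (lam - ε) ^ 2 = lam - ε := Real.sq_sqrt hle.le
    nlinarith [sq_nonneg (Real.sqrt (lam - ε) * |uv| - |duv|), sq_abs uv, sq_abs duv,
      sq_nonneg uv, Real.sqrt_nonneg (lam - ε)]


theorem weidmann_gronwall_estimate
    (p q r : ℝ → ℝ)
    -- basic assumptions on the coefficients, on (0,∞)
    (hpm : Measurable p) (hqm : Measurable q) (hrm : Measurable r)
    (hp : ∀ x ∈ Set.Ioi (0:ℝ), 0 < p x) (hr : ∀ x ∈ Set.Ioi (0:ℝ), 0 < r x)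
    (hploc : LocallyIntegrableOn (fun t => 1 / p t) (Set.Ioi (0:ℝ)))
    (hqloc : LocallyIntegrableOn q (Set.Ioi (0:ℝ)))
    (hrloc : LocallyIntegrableOn r (Set.Ioi (0:ℝ)))
    -- the coefficients are asymptotically Schrödinger-like
    (c : ℝ) (hc : 0 < c)
    (hpint : IntegrableOn (fun t => 1 - 1 / p t) (Set.Ioi c))
    (hrint : IntegrableOn (fun t => 1 - r t) (Set.Ioi c))
    -- `q = q₁ + q₂` with `q₁ ∈ L¹((c,∞))`, `q₂` locally AC, `q₂' ∈ L¹((c,∞))`, `q₂ → 0`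
    (q₁ q₂ dq₂ : ℝ → ℝ)
    (hqdec : ∀ x ∈ Set.Ioi (0:ℝ), q x = q₁ x + q₂ x)
    (hq₁int : IntegrableOn q₁ (Set.Ioi c))
    (hq₂AC : ∀ x ∈ Set.Ioi (0:ℝ), ∀ y ∈ Set.Ioi (0:ℝ), q₂ y = q₂ x + ∫ t in x..y, dq₂ t)
    (hdq₂int : IntegrableOn dq₂ (Set.Ioi c))
    (hq₂lim : Tendsto q₂ atTop (nhds 0))
    -- `λ`, `ε` and `t₀`
    (lam ε t₀ : ℝ) (hlam : 0 < lam) (hε : 0 < ε) (hεlt : ε < lam)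
    (ht₀ : c ≤ t₀) (hq₂small : ∀ t : ℝ, t₀ ≤ t → |q₂ t| ≤ ε)
    -- `u`: a nonzero real solution of `τ u = λ u`
    (u du : ℝ → ℝ) (hu : IsSolutionOnReal p q r (Set.Ioi (0:ℝ)) lam u du)
    (hune : ∃ x ∈ Set.Ioi (0:ℝ), u x ≠ 0)
    -- `h` and `g`
    (h g : ℝ → ℝ)
    (hh : h = fun t => (lam - q₂ t) * u t ^ 2 + (du t) ^ 2)
    (hg : g = fun t => |dq₂ t| / (lam - ε) + |q₁ t| / Real.sqrt (lam - ε) +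
      ((lam + ε) * |1 - 1 / p t| + lam * |1 - r t|) / Real.sqrt (lam - ε)) :
    -- conclusions
    (∀ t : ℝ, t₀ ≤ t → 0 < h t) ∧
    IntegrableOn g (Set.Ioi t₀) ∧
    (∃ h' : ℝ → ℝ,
      (∀ x y : ℝ, t₀ ≤ x → t₀ ≤ y → h y = h x + ∫ t in x..y, h' t) ∧
      (∀ᵐ t : ℝ, t₀ ≤ t → |h' t| ≤ g t * h t)) ∧
    (∃ L : ℝ, 0 < L ∧ Tendsto h atTop (nhds L)) := by
  obtain ⟨huc, hduc, hsol⟩ := hu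
  have hle : (0:ℝ) < lam - ε := by linarith
  have hsq : 0 < Real.sqrt (lam - ε) := Real.sqrt_pos.mpr hle
  have ht₀pos : 0 < t₀ := lt_of_lt_of_le hc ht₀
  have hmemI : ∀ t : ℝ, t₀ ≤ t → t ∈ Set.Ioi (0:ℝ) := fun t ht => lt_of_lt_of_le ht₀pos ht
  have hsubIoi : ∀ {x y : ℝ}, 0 < x → 0 < y → Set.uIcc x y ⊆ Set.Ioi (0:ℝ) := by
    intro x y hx hy t ht
    exact lt_of_lt_of_le (lt_min hx hy) ht.1
  ---------------------------------------------------------------------------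
  -- Part 1: positivity of h on [t₀, ∞)
  ---------------------------------------------------------------------------
  have hnotboth : ∀ t : ℝ, 0 < t → u t = 0 → du t = 0 → False := by
    intro t htpos hut hdut
    obtain ⟨x₀, hx₀I, hx₀ne⟩ := hune
    have hx₀pos : (0:ℝ) < x₀ := hx₀I
    set a := min t x₀ with ha
    set b := max t x₀ with hb
    have hab : a ≤ b := min_le_max
    have hapos : 0 < a := lt_min htpos hx₀pos
    have hIccsub : Set.Icc a b ⊆ Set.Ioi (0:ℝ) := fun s hs => lt_of_lt_of_le hapos hs.1
    have huIcc : Set.uIcc a b = Set.Icc a b := Set.uIcc_of_le hab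
    set w : ℝ → ℝ := fun s => |u s| + |du s| with hwdef
    set K : ℝ → ℝ := fun s => 1 / p s + |q s - lam * r s| with hKdef
    have hwcont : ContinuousOn w (Set.Icc a b) :=
      (((huc.mono hIccsub).abs).add ((hduc.mono hIccsub).abs))
    have hw0 : ∀ s ∈ Set.Icc a b, 0 ≤ w s := fun s _ =>
      add_nonneg (abs_nonneg _) (abs_nonneg _)
    have hKII : ∀ x' y', a ≤ x' → y' ≤ b → x' ≤ y' → IntervalIntegrable K volume x' y' := by
      intro x' y' h1 h2 h3
      have hsub : Set.uIcc x' y' ⊆ Set.Ioi (0:ℝ) := by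
        rw [Set.uIcc_of_le h3]
        exact fun s hs => lt_of_lt_of_le (lt_of_lt_of_le hapos h1) hs.1
      have h1p : IntervalIntegrable (fun s => 1 / p s) volume x' y' :=
        (hploc.integrableOn_compact_subset hsub isCompact_uIcc).intervalIntegrable
      have hqr : IntervalIntegrable (fun s => q s - lam * r s) volume x' y' :=
        ((hqloc.integrableOn_compact_subset hsub isCompact_uIcc).intervalIntegrable).sub
          (((hrloc.integrableOn_compact_subset hsub isCompact_uIcc).intervalIntegrable).const_mul lam)
      exact h1p.add hqr.abs
    have hK0 : ∀ s ∈ Set.Icc a b, 0 ≤ K s := by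
      intro s hs
      have := hp s (hIccsub hs)
      have h1 : 0 ≤ 1 / p s := by positivity
      exact add_nonneg h1 (abs_nonneg _)
    have habs : ∀ x' y', a ≤ x' → x' ≤ y' → y' ≤ b →
        |w y' - w x'| ≤ ∫ s in x'..y', K s * w s := by
      intro x' y' h1 h2 h3
      have hx'I : x' ∈ Set.Ioi (0:ℝ) := lt_of_lt_of_le hapos h1
      have hy'I : y' ∈ Set.Ioi (0:ℝ) := lt_of_lt_of_le hapos (h1.trans h2)
      have hsub : Set.uIcc x' y' ⊆ Set.Ioi (0:ℝ) := hsubIoi hx'I hy'I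
      have hIccsub' : Set.Icc x' y' ⊆ Set.Ioi (0:ℝ) := by
        rw [← Set.uIcc_of_le h2]; exact hsub
      have hinvp : IntervalIntegrable (fun s => 1 / p s) volume x' y' :=
        (hploc.integrableOn_compact_subset hsub isCompact_uIcc).intervalIntegrable
      have hqr : IntervalIntegrable (fun s => q s - lam * r s) volume x' y' :=
        ((hqloc.integrableOn_compact_subset hsub isCompact_uIcc).intervalIntegrable).sub
          (((hrloc.integrableOn_compact_subset hsub isCompact_uIcc).intervalIntegrable).const_mul lam)
      have hucont : ContinuousOn u (Set.uIcc x' y') := huc.mono hsub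
      have hducont : ContinuousOn du (Set.uIcc x' y') := hduc.mono hsub
      have hIIup : IntervalIntegrable (fun s => du s / p s) volume x' y' := by
        have heq : (fun s => du s / p s) = fun s => (1 / p s) * du s := by
          funext s; rw [div_eq_mul_inv, one_div]; ring
        rw [heq]
        exact hinvp.mul_continuousOn hducont
      have hIIqlru : IntervalIntegrable (fun s => (q s - lam * r s) * u s) volume x' y' :=
        hqr.mul_continuousOn hucont
      have e1 : u y' - u x' = ∫ s in x'..y', du s / p s := by
        have := (hsol x' hx'I y' hy'I).1; linarith
      have e2 : du y' - du x' = ∫ s in x'..y', (q s - lam * r s) * u s := by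
        have := (hsol x' hx'I y' hy'I).2; linarith
      have b1 : |u y' - u x'| ≤ ∫ s in x'..y', |du s / p s| := by
        rw [e1]; exact intervalIntegral.abs_integral_le_integral_abs h2
      have b2 : |du y' - du x'| ≤ ∫ s in x'..y', |(q s - lam * r s) * u s| := by
        rw [e2]; exact intervalIntegral.abs_integral_le_integral_abs h2
      have hKw : IntervalIntegrable (fun s => K s * w s) volume x' y' :=
        (hinvp.add hqr.abs).mul_continuousOn
          (((hucont.abs).add (hducont.abs)))
      have b3 : (∫ s in x'..y', |du s / p s|) + (∫ s in x'..y', |(q s - lam * r s) * u s|)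
          ≤ ∫ s in x'..y', K s * w s := by
        rw [← intervalIntegral.integral_add hIIup.abs hIIqlru.abs]
        refine intervalIntegral.integral_mono_on h2 (hIIup.abs.add hIIqlru.abs) hKw ?_
        intro s hs
        have hps : 0 < p s := hp s (hIccsub' hs)
        have hinv : 0 < 1 / p s := by positivity
        have e3 : |du s / p s| = (1 / p s) * |du s| := by
          rw [abs_div, abs_of_pos hps, div_eq_mul_inv, one_div]; ring
        have e4 : |(q s - lam * r s) * u s| = |q s - lam * r s| * |u s| := abs_mul _ _
        rw [e3, e4]
        simp only [hKdef, hwdef]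
        have h5 : 0 ≤ |q s - lam * r s| := abs_nonneg _
        nlinarith [abs_nonneg (u s), abs_nonneg (du s)]
      calc |w y' - w x'| = |(|u y'| - |u x'|) + (|du y'| - |du x'|)| := by
            simp only [hwdef]; ring_nf
        _ ≤ |(|u y'| - |u x'|)| + |(|du y'| - |du x'|)| := abs_add_le _ _
        _ ≤ |u y' - u x'| + |du y' - du x'| :=
            add_le_add (abs_abs_sub_abs_le_abs_sub _ _) (abs_abs_sub_abs_le_abs_sub _ _)
        _ ≤ (∫ s in x'..y', |du s / p s|) + (∫ s in x'..y', |(q s - lam * r s) * u s|) := by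
            gcongr
        _ ≤ ∫ s in x'..y', K s * w s := b3
    have hwzero : ∀ s ∈ Set.Icc a b, w s = 0 := by
      rcases le_total t x₀ with hcase | hcase
      · have hat : a = t := min_eq_left hcase
        refine zero_propagation hab w K hwcont hw0 (hKII a b le_rfl le_rfl hab) hK0 ?_ ?_
        · intro x' y' h1 h2 h3
          have := habs x' y' h1 h2 h3
          have := abs_le.mp this
          linarith [this.2]
        · rw [hat]; simp only [hwdef]; rw [hut, hdut]; simp
      · have hbt : b = t := max_eq_left hcase
        refine zero_propagation' hab w K hwcont hw0 (hKII a b le_rfl le_rfl hab) hK0 ?_ ?_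
        · intro x' y' h1 h2 h3
          have := habs x' y' h1 h2 h3
          have := abs_le.mp this
          linarith [this.1]
        · rw [hbt]; simp only [hwdef]; rw [hut, hdut]; simp
    have : w x₀ = 0 := hwzero x₀ ⟨min_le_right _ _, le_max_right _ _⟩
    simp only [hwdef] at this
    have : u x₀ = 0 := by
      have h1 := abs_nonneg (u x₀); have h2 := abs_nonneg (du x₀)
      have : |u x₀| = 0 := by linarith
      exact abs_eq_zero.mp this
    exact hx₀ne this
  have hq₂bd : ∀ t : ℝ, t₀ ≤ t → lam - ε ≤ lam - q₂ t ∧ lam - q₂ t ≤ lam + ε := by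
    intro t ht
    have := abs_le.mp (hq₂small t ht)
    constructor <;> linarith [this.1, this.2]
  have hpos : ∀ t : ℝ, t₀ ≤ t → 0 < h t := by
    intro t ht
    have htpos : 0 < t := hmemI t ht
    have hbd := (hq₂bd t ht).1
    rw [hh]
    simp only
    by_contra h0
    push_neg at h0
    have hu2 : 0 ≤ u t ^ 2 := sq_nonneg _
    have hdu2 : 0 ≤ du t ^ 2 := sq_nonneg _
    have hc1 : 0 ≤ (lam - q₂ t) * u t ^ 2 := mul_nonneg (by linarith) hu2
    have hu2' : u t ^ 2 ≤ 0 := by nlinarith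
    have hdu2' : du t ^ 2 ≤ 0 := by nlinarith
    have hut : u t = 0 := by
      have : u t ^ 2 = 0 := le_antisymm hu2' hu2
      exact pow_eq_zero_iff two_ne_zero |>.mp this
    have hdut : du t = 0 := by
      have : du t ^ 2 = 0 := le_antisymm hdu2' hdu2
      exact pow_eq_zero_iff two_ne_zero |>.mp this
    exact hnotboth t htpos hut hdut
  ---------------------------------------------------------------------------
  -- Part 2 : integrability of g
  ---------------------------------------------------------------------------
  have hIoisub : Set.Ioi t₀ ⊆ Set.Ioi c := Set.Ioi_subset_Ioi ht₀
  have hgint : IntegrableOn g (Set.Ioi t₀) := by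
    rw [hg]
    have h1 : IntegrableOn (fun t => |dq₂ t| / (lam - ε)) (Set.Ioi c) :=
      hdq₂int.abs.div_const _
    have h2 : IntegrableOn (fun t => |q₁ t| / Real.sqrt (lam - ε)) (Set.Ioi c) :=
      hq₁int.abs.div_const _
    have h3 : IntegrableOn
        (fun t => ((lam + ε) * |1 - 1 / p t| + lam * |1 - r t|) / Real.sqrt (lam - ε))
        (Set.Ioi c) := ((hpint.abs.const_mul _).add (hrint.abs.const_mul _)).div_const _
    exact MeasureTheory.IntegrableOn.mono_set ((h1.add h2).add h3) hIoisub
  ---------------------------------------------------------------------------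
  -- Part 3 : the derivative h' and the integral identity
  ---------------------------------------------------------------------------
  set A1 : ℝ → ℝ := fun t => du t / p t * u t + u t * (du t / p t) with hA1
  set A2 : ℝ → ℝ := fun t =>
    (q t - lam * r t) * u t * du t + du t * ((q t - lam * r t) * u t) with hA2
  set A3 : ℝ → ℝ := fun t => dq₂ t * (u t * u t) + q₂ t * A1 t with hA3
  set h' : ℝ → ℝ := fun t => lam * A1 t - A3 t + A2 t with hh'
  have hfacts : ∀ x y : ℝ, t₀ ≤ x → t₀ ≤ y →
      IntervalIntegrable (fun t => du t / p t) volume x y ∧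
      IntervalIntegrable (fun t => (q t - lam * r t) * u t) volume x y ∧
      IntervalIntegrable dq₂ volume x y ∧
      ContinuousOn q₂ (Set.uIcc x y) ∧
      IntervalIntegrable A1 volume x y ∧
      IntervalIntegrable A2 volume x y ∧
      IntervalIntegrable A3 volume x y := by
    intro x y hx hy
    have hx0 : (0:ℝ) < x := hmemI x hx
    have hy0 : (0:ℝ) < y := hmemI y hy
    have hsub : Set.uIcc x y ⊆ Set.Ioi 0 := hsubIoi hx0 hy0
    have hucont : ContinuousOn u (Set.uIcc x y) := huc.mono hsub
    have hducont : ContinuousOn du (Set.uIcc x y) := hduc.mono hsub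
    have hinvp : IntervalIntegrable (fun s => 1 / p s) volume x y :=
      (hploc.integrableOn_compact_subset hsub isCompact_uIcc).intervalIntegrable
    have hqr : IntervalIntegrable (fun s => q s - lam * r s) volume x y :=
      ((hqloc.integrableOn_compact_subset hsub isCompact_uIcc).intervalIntegrable).sub
        (((hrloc.integrableOn_compact_subset hsub isCompact_uIcc).intervalIntegrable).const_mul lam)
    have hIIup : IntervalIntegrable (fun s => du s / p s) volume x y := by
      have heq : (fun s => du s / p s) = fun s => (1 / p s) * du s := by
        funext s; rw [div_eq_mul_inv, one_div]; ring
      rw [heq]; exact hinvp.mul_continuousOn hducont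
    have hIIqlru : IntervalIntegrable (fun s => (q s - lam * r s) * u s) volume x y :=
      hqr.mul_continuousOn hucont
    have hsubc : Set.uIoc x y ⊆ Set.Ioi c := by
      intro s hs
      exact lt_of_le_of_lt (ht₀.trans (le_min hx hy)) hs.1
    have hIIdq₂ : IntervalIntegrable dq₂ volume x y :=
      intervalIntegrable_iff.mpr (hdq₂int.mono_set hsubc)
    have hq₂cont : ContinuousOn q₂ (Set.uIcc x y) := by
      have hprim : ContinuousOn (fun b => q₂ x + ∫ s in x..b, dq₂ s) (Set.uIcc x y) :=
        continuousOn_const.add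
          (intervalIntegral.continuousOn_primitive_interval' hIIdq₂ Set.left_mem_uIcc)
      exact hprim.congr (fun s hs => hq₂AC x hx0 s (hsub hs))
    have hIA1 : IntervalIntegrable A1 volume x y := by
      rw [hA1]
      exact (hIIup.mul_continuousOn hucont).add (hIIup.continuousOn_mul hucont)
    have hIA2 : IntervalIntegrable A2 volume x y := by
      rw [hA2]
      exact (hIIqlru.mul_continuousOn hducont).add (hIIqlru.continuousOn_mul hducont)
    have hIA3 : IntervalIntegrable A3 volume x y := by
      rw [hA3]
      exact (hIIdq₂.mul_continuousOn (hucont.mul hucont)).add (hIA1.continuousOn_mul hq₂cont)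
    exact ⟨hIIup, hIIqlru, hIIdq₂, hq₂cont, hIA1, hIA2, hIA3⟩
  have S1 : ∀ x y : ℝ, t₀ ≤ x → t₀ ≤ y → u y * u y = u x * u x + ∫ t in x..y, A1 t := by
    intro x y hx hy
    obtain ⟨hIIup, _, _, _, _, _, _⟩ := hfacts x y hx hy
    have hx0 : (0:ℝ) < x := hmemI x hx
    have hy0 : (0:ℝ) < y := hmemI y hy
    have hsub := hsubIoi hx0 hy0
    have hucont : ContinuousOn u (Set.uIcc x y) := huc.mono hsub
    have hrep : ∀ t ∈ Set.uIcc x y, u t = u x + ∫ s in x..t, du s / p s :=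
      fun t ht => (hsol x hx0 t (hsub ht)).1
    have := prod_rule_s13 u u _ _ hIIup hIIup hucont hucont hrep hrep
    simp only [hA1]
    exact this
  have S2 : ∀ x y : ℝ, t₀ ≤ x → t₀ ≤ y → du y * du y = du x * du x + ∫ t in x..y, A2 t := by
    intro x y hx hy
    obtain ⟨_, hIIqlru, _, _, _, _, _⟩ := hfacts x y hx hy
    have hx0 : (0:ℝ) < x := hmemI x hx
    have hy0 : (0:ℝ) < y := hmemI y hy
    have hsub := hsubIoi hx0 hy0
    have hducont : ContinuousOn du (Set.uIcc x y) := hduc.mono hsub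
    have hrep : ∀ t ∈ Set.uIcc x y, du t = du x + ∫ s in x..t, (q s - lam * r s) * u s :=
      fun t ht => (hsol x hx0 t (hsub ht)).2
    have := prod_rule_s13 du du _ _ hIIqlru hIIqlru hducont hducont hrep hrep
    simp only [hA2]
    exact this
  have S3 : ∀ x y : ℝ, t₀ ≤ x → t₀ ≤ y →
      q₂ y * (u y * u y) = q₂ x * (u x * u x) + ∫ t in x..y, A3 t := by
    intro x y hx hy
    obtain ⟨_, _, hIIdq₂, hq₂cont, hIA1, _, _⟩ := hfacts x y hx hy
    have hx0 : (0:ℝ) < x := hmemI x hx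
    have hy0 : (0:ℝ) < y := hmemI y hy
    have hsub := hsubIoi hx0 hy0
    have hucont : ContinuousOn u (Set.uIcc x y) := huc.mono hsub
    have hrepq₂ : ∀ t ∈ Set.uIcc x y, q₂ t = q₂ x + ∫ s in x..t, dq₂ s :=
      fun t ht => hq₂AC x hx0 t (hsub ht)
    have hrepuu : ∀ t ∈ Set.uIcc x y, u t * u t = u x * u x + ∫ s in x..t, A1 s := by
      intro t ht
      exact S1 x t hx (le_trans (le_min hx hy) ht.1)
    have := prod_rule_s13 q₂ (fun t => u t * u t) dq₂ A1 hIIdq₂ hIA1 hq₂cont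
      (hucont.mul hucont) hrepq₂ hrepuu
    simp only [hA3]
    exact this
  have key : ∀ x y : ℝ, t₀ ≤ x → t₀ ≤ y → h y = h x + ∫ t in x..y, h' t := by
    intro x y hx hy
    obtain ⟨_, _, _, _, hIA1, hIA2, hIA3⟩ := hfacts x y hx hy
    have hsplit : (∫ t in x..y, h' t)
        = lam * (∫ t in x..y, A1 t) - (∫ t in x..y, A3 t) + ∫ t in x..y, A2 t := by
      simp only [hh']
      rw [intervalIntegral.integral_add ((hIA1.const_mul lam).sub hIA3) hIA2,
        intervalIntegral.integral_sub (hIA1.const_mul lam) hIA3,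
        intervalIntegral.integral_const_mul]
    have e1 := S1 x y hx hy
    have e2 := S2 x y hx hy
    have e3 := S3 x y hx hy
    simp only [hh]
    rw [hsplit]
    linear_combination lam * e1 + e2 - e3
  ---------------------------------------------------------------------------
  -- Part 3b : the pointwise bound |h'| ≤ g h
  ---------------------------------------------------------------------------
  have hbound : ∀ t : ℝ, t₀ ≤ t → |h' t| ≤ g t * h t := by
    intro t ht
    have ht0 : (0:ℝ) < t := hmemI t ht
    have hpt : 0 < p t := hp t ht0
    have hq2b := hq₂small t ht
    have hbd1 := (hq₂bd t ht).1
    have hht := hpos t ht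
    have hexp : h t = (lam - q₂ t) * u t ^ 2 + du t ^ 2 := by rw [hh]
    set B : ℝ := q₁ t + (lam - q₂ t) * (1 / p t - 1) + lam * (1 - r t) with hB
    have hid : h' t = -(dq₂ t) * (u t * u t) + (2 * u t * du t) * B := by
      simp only [hh', hA1, hA2, hA3, hB]
      rw [hqdec t ht0]
      ring
    obtain ⟨qb1, qb2⟩ := quad_bounds hle hbd1 hexp
    have e1 : u t * u t ≤ h t / (lam - ε) := by
      rw [le_div_iff₀ hle]; exact qb1
    have e2 : 2 * |u t| * |du t| ≤ h t / Real.sqrt (lam - ε) := by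
      rw [le_div_iff₀ hsq]; linarith [qb2]
    have f3 : |B| ≤ |q₁ t| + (lam + ε) * |1 - 1 / p t| + lam * |1 - r t| := by
      have h1 : |(lam - q₂ t) * (1 / p t - 1)| ≤ (lam + ε) * |1 - 1 / p t| := by
        rw [abs_mul, abs_sub_comm (1 / p t) 1]
        refine mul_le_mul_of_nonneg_right ?_ (abs_nonneg _)
        have := abs_le.mp hq2b
        rw [abs_le]; constructor <;> [linarith [this.2]; linarith [this.1]]
      have h2 : |lam * (1 - r t)| = lam * |1 - r t| := by
        rw [abs_mul, abs_of_pos hlam]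
      have t1 := abs_add_le (q₁ t + (lam - q₂ t) * (1 / p t - 1)) (lam * (1 - r t))
      have t2 := abs_add_le (q₁ t) ((lam - q₂ t) * (1 / p t - 1))
      simp only [hB]
      linarith [h1, t1, t2, h2.le, h2.ge]
    have f4 : |h' t| ≤ |dq₂ t| * (u t * u t) + (2 * |u t| * |du t|) * |B| := by
      rw [hid]
      refine (abs_add_le _ _).trans ?_
      have a1 : |(-(dq₂ t)) * (u t * u t)| = |dq₂ t| * (u t * u t) := by
        rw [abs_mul, abs_neg, abs_of_nonneg (mul_self_nonneg (u t))]
      have a2 : |(2 * u t * du t) * B| = (2 * |u t| * |du t|) * |B| := by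
        rw [abs_mul, abs_mul, abs_mul, abs_two]
      rw [a1, a2]
    calc |h' t| ≤ |dq₂ t| * (u t * u t) + (2 * |u t| * |du t|) * |B| := f4
      _ ≤ |dq₂ t| * (h t / (lam - ε))
          + (h t / Real.sqrt (lam - ε))
            * (|q₁ t| + (lam + ε) * |1 - 1 / p t| + lam * |1 - r t|) := by
          refine add_le_add (mul_le_mul_of_nonneg_left e1 (abs_nonneg _)) ?_
          calc (2 * |u t| * |du t|) * |B|
              ≤ (h t / Real.sqrt (lam - ε)) * |B| :=
                mul_le_mul_of_nonneg_right e2 (abs_nonneg _)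
            _ ≤ _ := mul_le_mul_of_nonneg_left f3 (by positivity)
      _ = g t * h t := by simp only [hg]; ring
  ---------------------------------------------------------------------------
  -- Part 4 : the limit
  ---------------------------------------------------------------------------
  have hg0 : ∀ t : ℝ, 0 ≤ g t := by
    intro t; rw [hg]; positivity
  have hIIg : ∀ x y : ℝ, t₀ ≤ x → t₀ ≤ y → IntervalIntegrable g volume x y := by
    intro x y hx hy
    refine intervalIntegrable_iff.mpr (hgint.mono_set ?_)
    intro s hs
    exact lt_of_le_of_lt (le_min hx hy) hs.1
  have hIIh' : ∀ x y : ℝ, t₀ ≤ x → t₀ ≤ y → IntervalIntegrable h' volume x y := by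
    intro x y hx hy
    obtain ⟨_, _, _, _, hIA1, hIA2, hIA3⟩ := hfacts x y hx hy
    rw [hh']
    exact ((hIA1.const_mul lam).sub hIA3).add hIA2
  have htail : ∃ T : ℝ, t₀ ≤ T ∧ ∀ y, T ≤ y → (∫ t in T..y, g t) ≤ 1/4 := by
    have hlim := MeasureTheory.intervalIntegral_tendsto_integral_Ioi t₀ hgint tendsto_id
    set I := ∫ t in Set.Ioi t₀, g t with hI
    have hev : ∀ᶠ T in atTop, I - 1/4 < ∫ t in t₀..T, g t :=
      hlim.eventually (eventually_gt_nhds (by linarith))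
    obtain ⟨T, hT⟩ := (hev.and (eventually_ge_atTop t₀)).exists
    refine ⟨T, hT.2, fun y hy => ?_⟩
    have hyt₀ : t₀ ≤ y := hT.2.trans hy
    have hadd : (∫ t in t₀..T, g t) + ∫ t in T..y, g t = ∫ t in t₀..y, g t :=
      intervalIntegral.integral_add_adjacent_intervals
        (hIIg t₀ T le_rfl hT.2) (hIIg T y hT.2 hyt₀)
    have hup : (∫ t in t₀..y, g t) ≤ I := by
      rw [intervalIntegral.integral_of_le hyt₀]
      refine setIntegral_mono_set hgint (ae_of_all _ hg0) ?_
      exact HasSubset.Subset.eventuallyLE Set.Ioc_subset_Ioi_self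
    linarith [hT.1]
  obtain ⟨T, hTt₀, hTtail⟩ := htail
  have hconthIcc : ∀ x y : ℝ, t₀ ≤ x → t₀ ≤ y → ContinuousOn h (Set.uIcc x y) := by
    intro x y hx hy
    obtain ⟨_, _, _, hq₂cont, _, _, _⟩ := hfacts x y hx hy
    have hsub := hsubIoi (hmemI x hx) (hmemI y hy)
    rw [hh]
    exact ((continuousOn_const.sub hq₂cont).mul ((huc.mono hsub).pow 2)).add
      ((hduc.mono hsub).pow 2)
  have hTpos : 0 < h T := hpos T hTt₀
  have hbound2 : ∀ y : ℝ, T ≤ y → (2/3) * h T ≤ h y ∧ h y ≤ (4/3) * h T := by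
    intro y hy
    have hyt₀ : t₀ ≤ y := hTt₀.trans hy
    obtain ⟨s', hs'm, hmax⟩ := isCompact_Icc.exists_isMaxOn (Set.nonempty_Icc.mpr hy)
      ((hconthIcc T y hTt₀ hyt₀).mono (by rw [Set.uIcc_of_le hy]))
    have hs't₀ : t₀ ≤ s' := hTt₀.trans hs'm.1
    have hM0 : 0 ≤ h s' := (hpos s' hs't₀).le
    have hkey : ∀ x' y' : ℝ, T ≤ x' → x' ≤ y' → y' ≤ y →
        |∫ t in x'..y', h' t| ≤ (1/4) * h s' := by
      intro x' y' h1 h2 h3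
      have hx't₀ : t₀ ≤ x' := hTt₀.trans h1
      have hy't₀ : t₀ ≤ y' := hx't₀.trans h2
      have habs : |∫ t in x'..y', h' t| ≤ ∫ t in x'..y', |h' t| :=
        intervalIntegral.abs_integral_le_integral_abs h2
      have hmono : (∫ t in x'..y', |h' t|) ≤ ∫ t in x'..y', g t * h s' := by
        refine intervalIntegral.integral_mono_on h2 ((hIIh' x' y' hx't₀ hy't₀).abs)
          ((hIIg x' y' hx't₀ hy't₀).mul_const _) ?_
        intro s hs
        have hst₀ : t₀ ≤ s := hx't₀.trans hs.1
        have hsmem : s ∈ Set.Icc T y := ⟨h1.trans hs.1, hs.2.trans h3⟩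
        calc |h' s| ≤ g s * h s := hbound s hst₀
          _ ≤ g s * h s' := mul_le_mul_of_nonneg_left (hmax hsmem) (hg0 s)
      have hgm : (∫ t in x'..y', g t * h s') = (∫ t in x'..y', g t) * h s' :=
        intervalIntegral.integral_mul_const _ _
      have hgsmall : (∫ t in x'..y', g t) ≤ 1/4 := by
        have hadd : (∫ t in T..x', g t) + ∫ t in x'..y', g t = ∫ t in T..y', g t :=
          intervalIntegral.integral_add_adjacent_intervals
            (hIIg T x' hTt₀ hx't₀) (hIIg x' y' hx't₀ hy't₀)
        have hpos1 : 0 ≤ ∫ t in T..x', g t :=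
          intervalIntegral.integral_nonneg h1 (fun s _ => hg0 s)
        have := hTtail y' (h1.trans h2)
        linarith
      calc |∫ t in x'..y', h' t| ≤ (∫ t in x'..y', g t) * h s' := by
            rw [← hgm]; exact habs.trans hmono
        _ ≤ (1/4) * h s' := mul_le_mul_of_nonneg_right hgsmall hM0
    have hMle : h s' ≤ (4/3) * h T := by
      have hsT : h s' = h T + ∫ t in T..s', h' t := key T s' hTt₀ hs't₀
      have h5 := (abs_le.mp (hkey T s' le_rfl hs'm.1 hs'm.2)).2
      linarith
    constructor
    · have hyT : h y = h T + ∫ t in T..y, h' t := key T y hTt₀ hyt₀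
      have h6 := (abs_le.mp (hkey T y le_rfl hy le_rfl)).1
      linarith
    · exact le_trans (hmax ⟨hy, le_rfl⟩) hMle
  obtain ⟨s₀, hs₀m, hmax₀⟩ := isCompact_Icc.exists_isMaxOn (Set.nonempty_Icc.mpr hTt₀)
    ((hconthIcc t₀ T le_rfl hTt₀).mono (by rw [Set.uIcc_of_le hTt₀]))
  set C := max ((4/3) * h T) (h s₀) with hC
  have hCb : ∀ t : ℝ, t₀ ≤ t → h t ≤ C := by
    intro t ht
    rcases le_total t T with hcase | hcase
    · exact le_max_of_le_right (hmax₀ ⟨ht, hcase⟩)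
    · exact le_max_of_le_left (hbound2 t hcase).2
  have hC0 : 0 ≤ C := le_trans (hpos t₀ le_rfl).le (hCb t₀ le_rfl)
  -- measurability of h' on (t₀, ∞)
  have hsubt₀ : Set.Ioi t₀ ⊆ Set.Ioi (0:ℝ) := fun s hs => lt_trans ht₀pos hs
  have hq₂contIoi : ContinuousOn q₂ (Set.Ioi t₀) := by
    intro s hs
    obtain ⟨_, _, _, hq₂cont, _, _, _⟩ := hfacts t₀ (s+1) le_rfl (by linarith [hs.out])
    have hsle : t₀ ≤ s + 1 := by linarith [hs.out]
    rw [Set.uIcc_of_le hsle] at hq₂cont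
    have h1 : ContinuousWithinAt q₂ (Set.Icc t₀ (s+1)) s :=
      hq₂cont s ⟨le_of_lt hs, by linarith [hs.out]⟩
    have h2 : ContinuousWithinAt q₂ (Set.Ioi t₀ ∩ Set.Iio (s+1)) s :=
      h1.mono (fun z hz => ⟨le_of_lt hz.1, le_of_lt hz.2⟩)
    exact (continuousWithinAt_inter (Iio_mem_nhds (by linarith))).mp h2
  have hmeas : AEStronglyMeasurable h' (volume.restrict (Set.Ioi t₀)) := by
    have hmu : AEMeasurable u (volume.restrict (Set.Ioi t₀)) :=
      (huc.mono hsubt₀).aemeasurable measurableSet_Ioi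
    have hmdu : AEMeasurable du (volume.restrict (Set.Ioi t₀)) :=
      (hduc.mono hsubt₀).aemeasurable measurableSet_Ioi
    have hmq₂ : AEMeasurable q₂ (volume.restrict (Set.Ioi t₀)) :=
      hq₂contIoi.aemeasurable measurableSet_Ioi
    have hmdq₂ : AEMeasurable dq₂ (volume.restrict (Set.Ioi t₀)) :=
      (hdq₂int.1.mono_measure
        (Measure.restrict_mono (Set.Ioi_subset_Ioi ht₀) le_rfl)).aemeasurable
    have hmp : AEMeasurable p (volume.restrict (Set.Ioi t₀)) := hpm.aemeasurable
    have hmq : AEMeasurable q (volume.restrict (Set.Ioi t₀)) := hqm.aemeasurable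
    have hmr : AEMeasurable r (volume.restrict (Set.Ioi t₀)) := hrm.aemeasurable
    have hmA1 : AEMeasurable A1 (volume.restrict (Set.Ioi t₀)) := by
      rw [hA1]
      exact ((hmdu.div hmp).mul hmu).add (hmu.mul (hmdu.div hmp))
    have hmA2 : AEMeasurable A2 (volume.restrict (Set.Ioi t₀)) := by
      rw [hA2]
      exact (((hmq.sub (hmr.const_mul lam)).mul hmu).mul hmdu).add
        (hmdu.mul ((hmq.sub (hmr.const_mul lam)).mul hmu))
    have hmA3 : AEMeasurable A3 (volume.restrict (Set.Ioi t₀)) := by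
      rw [hA3]
      exact ((hmdq₂.mul (hmu.mul hmu))).add (hmq₂.mul hmA1)
    have : AEMeasurable h' (volume.restrict (Set.Ioi t₀)) := by
      rw [hh']
      exact ((hmA1.const_mul lam).sub hmA3).add hmA2
    exact this.aestronglyMeasurable
  have hInth' : IntegrableOn h' (Set.Ioi t₀) := by
    refine Integrable.mono' (hgint.const_mul C) hmeas ?_
    rw [ae_restrict_iff' measurableSet_Ioi]
    refine ae_of_all _ (fun t ht => ?_)
    have ht' : t₀ ≤ t := le_of_lt ht
    calc ‖h' t‖ = |h' t| := Real.norm_eq_abs _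
      _ ≤ g t * h t := hbound t ht'
      _ ≤ g t * C := mul_le_mul_of_nonneg_left (hCb t ht') (hg0 t)
      _ = C * g t := mul_comm _ _
  have hlim' := MeasureTheory.intervalIntegral_tendsto_integral_Ioi t₀ hInth' tendsto_id
  set L := h t₀ + ∫ t in Set.Ioi t₀, h' t with hL
  have htends : Tendsto h atTop (nhds L) := by
    have h1 : Tendsto (fun y => h t₀ + ∫ t in t₀..y, h' t) atTop (nhds L) :=
      tendsto_const_nhds.add hlim'
    refine Filter.Tendsto.congr' ?_ h1
    filter_upwards [eventually_ge_atTop t₀] with y hy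
    exact (key t₀ y le_rfl hy).symm
  have hL0 : 0 < L := by
    have hmono : ∀ᶠ y in atTop, (2/3) * h T ≤ h y := by
      filter_upwards [eventually_ge_atTop T] with y hy using (hbound2 y hy).1
    have := ge_of_tendsto htends hmono
    linarith
  exact ⟨hpos, hgint, ⟨h', key, ae_of_all _ hbound⟩, L, hL0, htends⟩
end

section
/- (Transfer matrix for the radial Laplacian of a homogeneous tree) Let b > 0 and λ > 0. Suppose u : (0,∞) → ℂ is continuous, is twice differentiable with u''(x) = −λ u(x) on each open interval (n, n+1) for integers n ≥ 0, the one-sided derivatives u'(n−) and u'(n+) exist for every integer n ≥ 1 with u'(n−) = b · u'(n+), and u'(0+) and u(0+) exist. Then for every integer n ≥ 0, the vector (u'(n+), u(n+))ᵀ equals M(λ)ⁿ (u'(0+), u(0+))ᵀ, where M(λ) is the 2×2 matrix with first row ( cos(√λ)/b , −(√λ/b) sin(√λ) ) and second row ( sin(√λ)/√λ , cos(√λ) ). -/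
/-!
STATEMENT 14 (Transfer matrix for the radial Laplacian of a homogeneous tree):
if u is continuous on (0,∞), solves u'' = -λu on each interval (n,n+1), and its
derivative satisfies the Kirchhoff matching u'(n-) = b·u'(n+) at every integer
n ≥ 1, then (u'(n+), u(n+))ᵀ = M(λ)ⁿ (u'(0+), u(0+))ᵀ.
-/

open MeasureTheory Set Filter

/-- A function with zero derivative on an open interval is constant there. -/
lemma htm_const_of_hasDerivAt_zero {f : ℝ → ℂ} {a c : ℝ}
    (h : ∀ x ∈ Set.Ioo a c, HasDerivAt f 0 x) :
    ∀ x ∈ Set.Ioo a c, ∀ y ∈ Set.Ioo a c, f x = f y := by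
  intro x hx y hy
  refine (convex_Ioo a c).is_const_of_fderivWithin_eq_zero
    (fun z hz => ((h z hz).differentiableAt).differentiableWithinAt) ?_ hx hy
  intro z hz
  rw [fderivWithin_of_isOpen isOpen_Ioo hz, (h z hz).hasFDerivAt.fderiv]
  ext
  simp

theorem homogeneous_tree_transfer_matrix
    (b lam : ℝ) (hb : 0 < b) (hlam : 0 < lam)
    (u du : ℝ → ℂ)
    -- `u` is continuous on (0,∞)
    (hucont : ContinuousOn u (Set.Ioi (0:ℝ)))
    -- on each interval (n, n+1) `u` is twice differentiable with `u'' = -λ u`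
    (hderiv : ∀ n : ℕ, ∀ x ∈ Set.Ioo (n : ℝ) (n + 1), HasDerivAt u (du x) x)
    (hode : ∀ n : ℕ, ∀ x ∈ Set.Ioo (n : ℝ) (n + 1), HasDerivAt du (-(lam : ℂ) * u x) x)
    -- the one-sided limits `u(n+) = U n`, `u'(n+) = D n` and `u'(n-) = Dm n`
    (U D Dm : ℕ → ℂ)
    (hU : ∀ n : ℕ, Tendsto u (nhdsWithin (n : ℝ) (Set.Ioi (n : ℝ))) (nhds (U n)))
    (hD : ∀ n : ℕ, Tendsto du (nhdsWithin (n : ℝ) (Set.Ioi (n : ℝ))) (nhds (D n)))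
    (hDm : ∀ n : ℕ, 1 ≤ n → Tendsto du (nhdsWithin (n : ℝ) (Set.Iio (n : ℝ))) (nhds (Dm n)))
    -- the Kirchhoff matching condition `u'(n-) = b u'(n+)` at every integer `n ≥ 1`
    (hmatch : ∀ n : ℕ, 1 ≤ n → Dm n = (b : ℂ) * D n)
    -- the transfer matrix
    (M : Matrix (Fin 2) (Fin 2) ℂ)
    (hM : M = !![(Real.cos (Real.sqrt lam) : ℂ) / (b : ℂ),
                 -(((Real.sqrt lam : ℝ) : ℂ) / (b : ℂ)) * ((Real.sin (Real.sqrt lam) : ℝ) : ℂ);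
                 ((Real.sin (Real.sqrt lam) : ℝ) : ℂ) / ((Real.sqrt lam : ℝ) : ℂ),
                 ((Real.cos (Real.sqrt lam) : ℝ) : ℂ)]) :
    ∀ n : ℕ, (M ^ n).mulVec ![D 0, U 0] = ![D n, U n] := by
  set s : ℝ := Real.sqrt lam with hs_def
  have hs : 0 < s := Real.sqrt_pos.mpr hlam
  have hs2 : (s : ℂ) ^ 2 = (lam : ℂ) := by
    have : s ^ 2 = lam := Real.sq_sqrt hlam.le
    push_cast [← this]; ring
  have hsne : (s : ℂ) ≠ 0 := by
    simpa using Complex.ofReal_ne_zero.mpr hs.ne'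
  have hbne : (b : ℂ) ≠ 0 := Complex.ofReal_ne_zero.mpr hb.ne'
  -- Key step: the transfer relations
  have key : ∀ n : ℕ,
      Dm (n + 1) = D n * Complex.cos s - (s : ℂ) * U n * Complex.sin s ∧
      (s : ℂ) * U (n + 1) = D n * Complex.sin s + (s : ℂ) * U n * Complex.cos s := by
    intro n
    -- trig helper functions on the interval (n, n+1)
    set C : ℝ → ℂ := fun x => Complex.cos ((s : ℂ) * ((x : ℂ) - (n : ℂ))) with hC_def
    set S : ℝ → ℂ := fun x => Complex.sin ((s : ℂ) * ((x : ℂ) - (n : ℂ))) with hS_def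
    have harg : ∀ x : ℝ, HasDerivAt (fun x : ℝ => (s : ℂ) * ((x : ℂ) - (n : ℂ))) (s : ℂ) x := by
      intro x
      have h1 : HasDerivAt (fun x : ℝ => (x : ℂ)) 1 x := by
        simpa using (hasDerivAt_id x).ofReal_comp
      simpa using (((h1.sub_const ((n : ℕ) : ℂ)).const_mul ((s : ℂ))))
    have hCd : ∀ x : ℝ, HasDerivAt C (-(s : ℂ) * S x) x := by
      intro x
      have := (Complex.hasDerivAt_cos ((s : ℂ) * ((x : ℂ) - (n : ℂ)))).comp x (harg x)
      simpa [hC_def, hS_def, Function.comp_def, mul_comm, mul_left_comm, mul_assoc] using this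
    have hSd : ∀ x : ℝ, HasDerivAt S ((s : ℂ) * C x) x := by
      intro x
      have := (Complex.hasDerivAt_sin ((s : ℂ) * ((x : ℂ) - (n : ℂ)))).comp x (harg x)
      simpa [hC_def, hS_def, Function.comp_def, mul_comm, mul_left_comm, mul_assoc] using this
    -- the two conserved quantities
    set E1 : ℝ → ℂ := fun x => du x * C x + (s : ℂ) * (u x * S x) with hE1_def
    set E2 : ℝ → ℂ := fun x => du x * S x - (s : ℂ) * (u x * C x) with hE2_def
    have hE1d : ∀ x ∈ Set.Ioo (n : ℝ) (n + 1), HasDerivAt E1 0 x := by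
      intro x hx
      have h := ((hode n x hx).mul (hCd x)).add
        (((hderiv n x hx).mul (hSd x)).const_mul ((s : ℂ)))
      have heq : (-(lam:ℂ) * u x) * C x + du x * (-(s:ℂ) * S x)
          + (s:ℂ) * (du x * S x + u x * ((s:ℂ) * C x)) = 0 := by
        have : (lam : ℂ) = (s : ℂ) ^ 2 := hs2.symm
        rw [this]; ring
      have h2 : HasDerivAt E1 ((-(lam:ℂ) * u x) * C x + du x * (-(s:ℂ) * S x)
          + (s:ℂ) * (du x * S x + u x * ((s:ℂ) * C x))) x := h
      rwa [heq] at h2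
    have hE2d : ∀ x ∈ Set.Ioo (n : ℝ) (n + 1), HasDerivAt E2 0 x := by
      intro x hx
      have h := ((hode n x hx).mul (hSd x)).sub
        (((hderiv n x hx).mul (hCd x)).const_mul ((s : ℂ)))
      have heq : (-(lam:ℂ) * u x) * S x + du x * ((s:ℂ) * C x)
          - (s:ℂ) * (du x * C x + u x * (-(s:ℂ) * S x)) = 0 := by
        have : (lam : ℂ) = (s : ℂ) ^ 2 := hs2.symm
        rw [this]; ring
      have h2 : HasDerivAt E2 ((-(lam:ℂ) * u x) * S x + du x * ((s:ℂ) * C x)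
          - (s:ℂ) * (du x * C x + u x * (-(s:ℂ) * S x))) x := h
      rwa [heq] at h2
    have hmem : (n : ℝ) + 1/2 ∈ Set.Ioo (n : ℝ) (n + 1) := by
      constructor <;> norm_num
    have hlt : (n : ℝ) < (n : ℝ) + 1 := by linarith
    -- the right-endpoint filter and the left-endpoint filter
    set R : Filter ℝ := nhdsWithin (n : ℝ) (Set.Ioo (n : ℝ) (n + 1)) with hR_def
    set L : Filter ℝ := nhdsWithin ((n : ℝ) + 1) (Set.Ioo (n : ℝ) (n + 1)) with hL_def
    haveI hRne : R.NeBot := left_nhdsWithin_Ioo_neBot hlt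
    haveI hLne : L.NeBot := right_nhdsWithin_Ioo_neBot hlt
    have hRle : R ≤ nhdsWithin (n : ℝ) (Set.Ioi (n : ℝ)) :=
      nhdsWithin_mono _ (fun x hx => hx.1)
    have hLle : L ≤ nhdsWithin ((n : ℝ) + 1) (Set.Iio ((n : ℝ) + 1)) :=
      nhdsWithin_mono _ (fun x hx => hx.2)
    -- constancy of E1, E2
    have hE1const := htm_const_of_hasDerivAt_zero hE1d
    have hE2const := htm_const_of_hasDerivAt_zero hE2d
    have hE1ev : ∀ᶠ x in R, E1 x = E1 ((n:ℝ) + 1/2) := by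
      filter_upwards [self_mem_nhdsWithin] with x hx
      exact hE1const x hx _ hmem
    have hE1ev' : ∀ᶠ x in L, E1 x = E1 ((n:ℝ) + 1/2) := by
      filter_upwards [self_mem_nhdsWithin] with x hx
      exact hE1const x hx _ hmem
    have hE2ev : ∀ᶠ x in R, E2 x = E2 ((n:ℝ) + 1/2) := by
      filter_upwards [self_mem_nhdsWithin] with x hx
      exact hE2const x hx _ hmem
    have hE2ev' : ∀ᶠ x in L, E2 x = E2 ((n:ℝ) + 1/2) := by
      filter_upwards [self_mem_nhdsWithin] with x hx
      exact hE2const x hx _ hmem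
    -- limits of C and S at the endpoints
    have hCcont : Continuous C := by
      apply Complex.continuous_cos.comp
      exact (continuous_const.mul (Complex.continuous_ofReal.sub continuous_const))
    have hScont : Continuous S := by
      apply Complex.continuous_sin.comp
      exact (continuous_const.mul (Complex.continuous_ofReal.sub continuous_const))
    have hCn : Tendsto C R (nhds 1) := by
      have : C (n : ℝ) = 1 := by simp [hC_def]
      simpa [this] using (hCcont.tendsto (n : ℝ)).mono_left nhdsWithin_le_nhds
    have hSn : Tendsto S R (nhds 0) := by
      have : S (n : ℝ) = 0 := by simp [hS_def]
      simpa [this] using (hScont.tendsto (n : ℝ)).mono_left nhdsWithin_le_nhds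
    have hCn1 : Tendsto C L (nhds (Complex.cos s)) := by
      have : C ((n : ℝ) + 1) = Complex.cos s := by simp [hC_def]
      simpa [this] using (hCcont.tendsto ((n : ℝ) + 1)).mono_left nhdsWithin_le_nhds
    have hSn1 : Tendsto S L (nhds (Complex.sin s)) := by
      have : S ((n : ℝ) + 1) = Complex.sin s := by simp [hS_def]
      simpa [this] using (hScont.tendsto ((n : ℝ) + 1)).mono_left nhdsWithin_le_nhds
    -- limits of u, du at the endpoints
    have huR : Tendsto u R (nhds (U n)) := (hU n).mono_left hRle
    have hduR : Tendsto du R (nhds (D n)) := (hD n).mono_left hRle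
    have hduL : Tendsto du L (nhds (Dm (n + 1))) := by
      have := hDm (n + 1) (Nat.le_add_left 1 n)
      push_cast at this ⊢
      exact this.mono_left hLle
    -- the left limit of u at n+1 equals U (n+1) by continuity
    have hn1pos : (0 : ℝ) < (n : ℝ) + 1 := by positivity
    have hcontat : Tendsto u (nhdsWithin ((n:ℝ)+1) (Set.Ioi (0:ℝ)))
        (nhds (u ((n:ℝ)+1))) := hucont _ (Set.mem_Ioi.mpr hn1pos)
    have huL : Tendsto u L (nhds (u ((n:ℝ)+1))) :=
      hcontat.mono_left (nhdsWithin_mono _ (fun x hx => lt_of_le_of_lt n.cast_nonneg hx.1))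
    have hUn1 : u ((n:ℝ)+1) = U (n + 1) := by
      have h1 : Tendsto u (nhdsWithin ((n:ℝ)+1) (Set.Ioi ((n:ℝ)+1)))
          (nhds (u ((n:ℝ)+1))) :=
        hcontat.mono_left (nhdsWithin_mono _ (fun x hx => lt_trans hn1pos hx))
      have h2 := hU (n + 1)
      push_cast at h2
      haveI : (nhdsWithin ((n:ℝ)+1) (Set.Ioi ((n:ℝ)+1))).NeBot := nhdsGT_neBot _
      exact tendsto_nhds_unique h1 h2
    rw [hUn1] at huL
    -- compute the four limit identities
    have lim1 : Tendsto E1 R (nhds (D n * 1 + (s:ℂ) * (U n * 0))) :=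
      (hduR.mul hCn).add ((huR.mul hSn).const_mul _)
    have lim2 : Tendsto E2 R (nhds (D n * 0 - (s:ℂ) * (U n * 1))) :=
      (hduR.mul hSn).sub ((huR.mul hCn).const_mul _)
    have lim3 : Tendsto E1 L
        (nhds (Dm (n+1) * Complex.cos s + (s:ℂ) * (U (n+1) * Complex.sin s))) :=
      (hduL.mul hCn1).add ((huL.mul hSn1).const_mul _)
    have lim4 : Tendsto E2 L
        (nhds (Dm (n+1) * Complex.sin s - (s:ℂ) * (U (n+1) * Complex.cos s))) :=
      (hduL.mul hSn1).sub ((huL.mul hCn1).const_mul _)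
    have lim1' : Tendsto E1 R (nhds (E1 ((n:ℝ) + 1/2))) :=
      (tendsto_const_nhds.congr' (hE1ev.mono fun x h => h.symm))
    have lim2' : Tendsto E2 R (nhds (E2 ((n:ℝ) + 1/2))) :=
      (tendsto_const_nhds.congr' (hE2ev.mono fun x h => h.symm))
    have lim3' : Tendsto E1 L (nhds (E1 ((n:ℝ) + 1/2))) :=
      (tendsto_const_nhds.congr' (hE1ev'.mono fun x h => h.symm))
    have lim4' : Tendsto E2 L (nhds (E2 ((n:ℝ) + 1/2))) :=
      (tendsto_const_nhds.congr' (hE2ev'.mono fun x h => h.symm))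
    have eq1 : Dm (n+1) * Complex.cos s + (s:ℂ) * (U (n+1) * Complex.sin s) = D n := by
      have := (tendsto_nhds_unique lim3 lim3').trans
        (tendsto_nhds_unique lim1' lim1)
      simpa using this
    have eq2 : Dm (n+1) * Complex.sin s - (s:ℂ) * (U (n+1) * Complex.cos s)
        = -((s:ℂ) * U n) := by
      have := (tendsto_nhds_unique lim4 lim4').trans
        (tendsto_nhds_unique lim2' lim2)
      simpa using this
    have pyth : Complex.cos s ^ 2 + Complex.sin s ^ 2 = 1 := by
      rw [add_comm]; exact Complex.sin_sq_add_cos_sq _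
    constructor
    · have : Dm (n+1) * (Complex.cos s ^ 2 + Complex.sin s ^ 2)
          = D n * Complex.cos s - (s:ℂ) * U n * Complex.sin s := by
        have h1 := congrArg (· * Complex.cos s) eq1
        have h2 := congrArg (· * Complex.sin s) eq2
        linear_combination h1 + h2
      rwa [pyth, mul_one] at this
    · have : (s:ℂ) * U (n+1) * (Complex.cos s ^ 2 + Complex.sin s ^ 2)
          = D n * Complex.sin s + (s:ℂ) * U n * Complex.cos s := by
        have h1 := congrArg (· * Complex.sin s) eq1
        have h2 := congrArg (· * Complex.cos s) eq2
        linear_combination h1 - h2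
      rwa [pyth, mul_one] at this
  -- recurrences for D and U
  have hDrec : ∀ n : ℕ, D (n + 1)
      = (D n * Complex.cos s - (s : ℂ) * U n * Complex.sin s) / (b : ℂ) := by
    intro n
    have h := hmatch (n + 1) (Nat.le_add_left 1 n)
    rw [(key n).1] at h
    rw [eq_div_iff hbne]
    linear_combination -h
  have hUrec : ∀ n : ℕ, U (n + 1)
      = (D n * Complex.sin s + (s : ℂ) * U n * Complex.cos s) / (s : ℂ) := by
    intro n
    rw [eq_div_iff hsne]
    linear_combination (key n).2
  -- the matrix action realizes the recurrence
  have hstep : ∀ n : ℕ, M.mulVec ![D n, U n] = ![D (n+1), U (n+1)] := by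
    intro n
    rw [hM]
    funext i
    fin_cases i <;>
      · simp only [Matrix.mulVec, dotProduct, Fin.sum_univ_two, Matrix.cons_val',
          Matrix.cons_val_zero, Matrix.cons_val_one, Matrix.head_cons, Matrix.head_fin_const,
          Matrix.empty_val', Matrix.cons_val_fin_one, Matrix.of_apply, Fin.isValue, Fin.zero_eta, Fin.mk_one,
          hDrec n, hUrec n, Complex.ofReal_cos, Complex.ofReal_sin]
        field_simp
        all_goals ring
  intro n
  induction n with
  | zero => simp [Matrix.one_mulVec]
  | succ n ih =>
      rw [pow_succ']
      rw [← Matrix.mulVec_mulVec, ih, hstep n]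
end
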